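/- arXiv:2206.09147 — 5 statements merged into one kernel-verified Lean document; each statement's English description precedes it below -/
import Mathlib

section
/- Multivariate deformed Cauchy formula in rising-binomial form: let 0 < τ₂ < τ₁ be reals, let n, k be naturals with k ≥ 1, and let x₁, …, x_{k+1} be real numbers. Then C(x₁ + ⋯ + x_{k+1} + n − 1, n) = Σ τ₁^{Σ_{j=1}^{k} x_j(n − s_j)} · τ₂^{Σ_{j=1}^{k} r_j z_j} · ∏_{j=1}^{k+1} C(x_j + r_j − 1, r_j), where the sum runs over all tuples (r₁,…,r_k) of naturals with r₁ + ⋯ + r_k ≤ n, and where s_j = r₁ + ⋯ + r_j, r_{k+1} = n − s_k, and z_j = x_{j+1} + ⋯ + x_{k+1}. -/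
open Finset

noncomputable def dnum (τ₁ τ₂ x : ℝ) : ℝ := (τ₁ ^ x - τ₂ ^ x) / (τ₁ - τ₂)

noncomputable def dfac (τ₁ τ₂ : ℝ) (r : ℕ) : ℝ :=
  ∏ j ∈ Finset.range r, dnum τ₁ τ₂ ((j : ℝ) + 1)

noncomputable def dfall (τ₁ τ₂ x : ℝ) (r : ℕ) : ℝ :=
  ∏ i ∈ Finset.range r, dnum τ₁ τ₂ (x - (i : ℝ))

noncomputable def dbinom (τ₁ τ₂ x : ℝ) (r : ℕ) : ℝ := dfall τ₁ τ₂ x r / dfac τ₁ τ₂ r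

noncomputable def dmulti (τ₁ τ₂ x : ℝ) {k : ℕ} (r : Fin k → ℕ) : ℝ :=
  dfall τ₁ τ₂ x (∑ j, r j) / ∏ j, dfac τ₁ τ₂ (r j)

open Finset

noncomputable def Np (q x : ℝ) (r : ℕ) : ℝ := ∏ i ∈ Finset.range r, (1 - q ^ (x + (i:ℝ)))
noncomputable def Dq (q : ℝ) (r : ℕ) : ℝ := ∏ i ∈ Finset.range r, (1 - q ^ (1 + (i:ℝ)))
noncomputable def Rq (q x : ℝ) (r : ℕ) : ℝ := Np q x r / Dq q r

lemma Dq_pos {q : ℝ} (hq0 : 0 < q) (hq1 : q < 1) (r : ℕ) : 0 < Dq q r := by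
  apply Finset.prod_pos
  intro i _
  have : q ^ (1 + (i:ℝ)) < 1 :=
    Real.rpow_lt_one hq0.le hq1 (by positivity)
  linarith

lemma Rq_zero' (q : ℝ) (r : ℕ) : Rq q 0 (r + 1) = 0 := by
  have : Np q 0 (r+1) = 0 := by
    apply Finset.prod_eq_zero (Finset.mem_range.2 (Nat.succ_pos r))
    norm_num
  simp [Rq, this]

lemma Rq_zero_r (q x : ℝ) : Rq q x 0 = 1 := by simp [Rq, Np, Dq]

lemma Np_succ (q x : ℝ) (r : ℕ) : Np q x (r + 1) = Np q x r * (1 - q ^ (x + (r:ℝ))) := by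
  simp [Np, Finset.prod_range_succ]

lemma Np_succ' (q x : ℝ) (r : ℕ) : Np q x (r + 1) = (1 - q ^ x) * Np q (x+1) r := by
  rw [Np, Finset.prod_range_succ']
  have h0 : x + ((0:ℕ):ℝ) = x := by norm_num
  rw [h0, mul_comm]
  congr 1
  apply Finset.prod_congr rfl; intro i _
  congr 1
  push_cast
  ring_nf

lemma pascalA {q : ℝ} (hq0 : 0 < q) (hq1 : q < 1) (x : ℝ) (r : ℕ) :
    Rq q (x + 1) (r + 1) = Rq q x (r + 1) + q ^ x * Rq q (x + 1) r := by
  have hd : Dq q (r + 1) = Dq q r * (1 - q ^ (1 + (r:ℝ))) := by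
    simp [Dq, Finset.prod_range_succ]
  have hdr := Dq_pos hq0 hq1 (q := q) r
  have hdr1 : (0:ℝ) < 1 - q ^ (1 + (r:ℝ)) := by
    have : q ^ (1 + (r:ℝ)) < 1 := Real.rpow_lt_one hq0.le hq1 (by positivity)
    linarith
  have key : Np q (x+1) (r+1) = Np q x (r+1) + q ^ x * (1 - q ^ (1+(r:ℝ))) * Np q (x+1) r := by
    have h1 : Np q (x+1) (r+1) = Np q (x+1) r * (1 - q ^ (x + 1 + (r:ℝ))) := Np_succ _ _ _
    have h2 : Np q x (r+1) = (1 - q ^ x) * Np q (x+1) r := Np_succ' _ _ _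
    have h3 : q ^ (x + 1 + (r:ℝ)) = q ^ x * q ^ (1 + (r:ℝ)) := by
      rw [← Real.rpow_add hq0]; ring_nf
    rw [h1, h2, h3]; ring
  rw [Rq, Rq, Rq, key, hd]
  field_simp

lemma pascalA' {q : ℝ} (hq0 : 0 < q) (hq1 : q < 1) (x : ℝ) (r : ℕ) :
    Rq q (x + 1) r = Rq q x r + q ^ x * (if r = 0 then 0 else Rq q (x + 1) (r - 1)) := by
  cases r with
  | zero => simp [Rq_zero_r]
  | succ r => simpa using pascalA hq0 hq1 x r

lemma qint {q : ℝ} (hq0 : 0 < q) (hq1 : q < 1) (m : ℕ) :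
    ∀ (n : ℕ) (y : ℝ), Rq q ((m:ℝ) + y) n =
      ∑ a ∈ Finset.range (n + 1), q ^ ((a:ℝ) * y) * Rq q (m:ℝ) a * Rq q y (n - a) := by
  induction m with
  | zero =>
    intro n y
    rw [Finset.sum_eq_single 0]
    · simp [Rq_zero_r]
    · intro b _ hb
      obtain ⟨c, rfl⟩ := Nat.exists_eq_succ_of_ne_zero hb
      have h0 : Rq q (((0:ℕ)):ℝ) (c+1) = 0 := by simpa using Rq_zero' q c
      simp only [Nat.succ_eq_add_one, h0]
      ring
    · intro h; simp at h
  | succ m ih =>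
    intro n
    induction n with
    | zero =>
      intro y; simp [Rq_zero_r]
    | succ n ihn =>
      intro y
      have hcast : ((m+1:ℕ):ℝ) = (m:ℝ) + 1 := by push_cast; ring
      have hp' : ∀ a:ℕ, Rq q ((m:ℝ)+1) a
          = Rq q (m:ℝ) a + q^(m:ℝ) * (if a = 0 then 0 else Rq q ((m:ℝ)+1) (a-1)) :=
        pascalA' hq0 hq1 _
      have hL : Rq q ((((m+1:ℕ)):ℝ) + y) (n+1)
          = Rq q ((m:ℝ) + y) (n+1) + q^((m:ℝ)+y) * Rq q ((((m+1:ℕ)):ℝ) + y) n := by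
        have e1 : ((m+1:ℕ):ℝ) + y = ((m:ℝ) + y) + 1 := by push_cast; ring
        rw [e1, pascalA hq0 hq1 _ n, ← e1]
      rw [hL, ih (n+1) y, ihn y]
      -- now prove sum identity
      have key : ∀ a ∈ Finset.range (n+2), q ^ ((a:ℝ)*y) * Rq q ((m+1:ℕ):ℝ) a * Rq q y (n+1-a)
          = q ^ ((a:ℝ)*y) * Rq q (m:ℝ) a * Rq q y (n+1-a)
            + q ^ ((a:ℝ)*y) * (q^(m:ℝ) * (if a = 0 then 0 else Rq q ((m:ℝ)+1) (a-1))) * Rq q y (n+1-a) := by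
        intro a _
        rw [hcast, hp' a]; ring
      rw [Finset.sum_congr rfl key, Finset.sum_add_distrib]
      congr 1
      symm
      rw [Finset.sum_range_succ']
      simp only [eq_self_iff_true, if_true, mul_zero, zero_mul, add_zero]
      rw [Finset.mul_sum]
      apply Finset.sum_congr rfl
      intro a _
      rw [if_neg (Nat.succ_ne_zero a), Nat.add_sub_cancel, Nat.succ_sub_succ, hcast]
      have e2 : q ^ ((((a+1:ℕ)):ℝ)*y) * q^(m:ℝ) = q^((m:ℝ)+y) * q^((a:ℝ)*y) := by
        rw [← Real.rpow_add hq0, ← Real.rpow_add hq0]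
        push_cast; ring_nf
      calc q ^ ((((a+1:ℕ)):ℝ)*y) * (q^(m:ℝ) * Rq q ((m:ℝ)+1) a) * Rq q y (n-a)
          = (q ^ ((((a+1:ℕ)):ℝ)*y) * q^(m:ℝ)) * Rq q ((m:ℝ)+1) a * Rq q y (n-a) := by ring
        _ = q^((m:ℝ)+y) * (q^((a:ℝ)*y) * Rq q ((m:ℝ)+1) a * Rq q y (n-a)) := by rw [e2]; ring

open Polynomial in
lemma qreal {q : ℝ} (hq0 : 0 < q) (hq1 : q < 1) (n : ℕ) (x y : ℝ) :
    Rq q (x + y) n =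
      ∑ a ∈ Finset.range (n + 1), q ^ ((a:ℝ) * y) * Rq q x a * Rq q y (n - a) := by
  set p1 : Polynomial ℝ :=
    C (Dq q n)⁻¹ * ∏ i ∈ Finset.range n, (1 - C (q ^ (y + (i:ℝ))) * X) with hp1
  set p2 : Polynomial ℝ :=
    ∑ a ∈ Finset.range (n + 1),
      C (q ^ ((a:ℝ) * y) * Rq q y (n - a) * (Dq q a)⁻¹) *
        ∏ i ∈ Finset.range a, (1 - C (q ^ ((i:ℝ))) * X) with hp2
  have ev1 : ∀ z : ℝ, eval (q ^ z) p1 = Rq q (z + y) n := by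
    intro z
    rw [hp1]
    simp only [eval_mul, eval_C, eval_prod, eval_sub, eval_one, eval_mul, eval_C, eval_X]
    rw [Rq, Np]
    rw [div_eq_inv_mul]
    congr 1
    apply Finset.prod_congr rfl
    intro i _
    congr 1
    rw [← Real.rpow_add hq0]
    ring_nf
  have ev2 : ∀ z : ℝ, eval (q ^ z) p2 =
      ∑ a ∈ Finset.range (n + 1), q ^ ((a:ℝ) * y) * Rq q z a * Rq q y (n - a) := by
    intro z
    rw [hp2]
    rw [eval_finset_sum]
    apply Finset.sum_congr rfl
    intro a _
    simp only [eval_mul, eval_C, eval_prod, eval_sub, eval_one, eval_mul, eval_C, eval_X]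
    simp only [Rq, Np]
    have : ∏ i ∈ Finset.range a, (1 - q ^ ((i:ℝ)) * q ^ z)
        = ∏ i ∈ Finset.range a, (1 - q ^ (z + (i:ℝ))) := by
      apply Finset.prod_congr rfl
      intro i _
      rw [← Real.rpow_add hq0]
      ring_nf
    rw [this]
    ring
  have hanti : StrictAnti (fun m : ℕ => q ^ ((m:ℝ))) := by
    intro a b hab
    exact Real.rpow_lt_rpow_of_exponent_gt hq0 hq1 (by exact_mod_cast hab)
  have hinf : {z : ℝ | eval z p1 = eval z p2}.Infinite := by
    apply Set.infinite_of_injective_forall_mem hanti.injective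
    intro m
    show eval (q ^ ((m:ℝ))) p1 = eval (q ^ ((m:ℝ))) p2
    rw [ev1, ev2]
    exact qint hq0 hq1 m n y
  have hpq : p1 = p2 := Polynomial.eq_of_infinite_eval_eq p1 p2 hinf
  have := congrArg (eval (q ^ x)) hpq
  rw [ev1, ev2] at this
  exact this

lemma Z_zero {k : ℕ} (x : Fin (k+2) → ℝ) :
    (∑ i ∈ Finset.univ.filter fun i : Fin (k+2) => ((0 : Fin (k+1)):ℕ) < (i:ℕ), x i)
      = ∑ i : Fin (k+1), x i.succ := by
  rw [Finset.sum_filter, Fin.sum_univ_succ]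
  simp

lemma Z_succ {k : ℕ} (x : Fin (k+2) → ℝ) (j : Fin k) :
    (∑ i ∈ Finset.univ.filter fun i : Fin (k+2) => ((j.succ : Fin (k+1)):ℕ) < (i:ℕ), x i)
      = ∑ i ∈ Finset.univ.filter fun i : Fin (k+1) => (j:ℕ) < (i:ℕ), x i.succ := by
  rw [Finset.sum_filter, Finset.sum_filter, Fin.sum_univ_succ]
  simp [Fin.val_succ]

lemma psi {q : ℝ} (hq0 : 0 < q) (hq1 : q < 1) :
    ∀ (k n : ℕ) (x : Fin (k+1) → ℝ),
    Rq q (∑ i, x i) n =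
      ∑ r ∈ (Fintype.piFinset fun _ : Fin k => Finset.range (n+1)).filter
          (fun r => ∑ j, r j ≤ n),
        q ^ (∑ j : Fin k, (r j : ℝ) *
              (∑ i ∈ Finset.univ.filter fun i : Fin (k+1) => (j:ℕ) < (i:ℕ), x i)) *
        ∏ j : Fin (k+1), Rq q (x j)
          ((Fin.snoc r (n - ∑ i, r i) : Fin (k+1) → ℕ) j) := by
  intro k
  induction k with
  | zero =>
    intro n x
    have hset : ((Fintype.piFinset fun _ : Fin 0 => Finset.range (n+1)).filter
        (fun r => ∑ j, r j ≤ n)) = {fun i => i.elim0} := by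
      apply Finset.eq_singleton_iff_unique_mem.mpr
      constructor
      · simp only [Finset.mem_filter, Fintype.mem_piFinset]
        constructor
        · intro a; exact a.elim0
        · simp
      · intro r _; funext i; exact i.elim0
    rw [hset, Finset.sum_singleton]
    simp [Fin.snoc, Rq]
  | succ k ih =>
    intro n x
    have hL : (∑ i, x i) = x 0 + ∑ i : Fin (k+1), x i.succ := Fin.sum_univ_succ x
    rw [hL, qreal hq0 hq1 n (x 0) (∑ i : Fin (k+1), x i.succ)]
    have step1 : ∀ a ∈ Finset.range (n+1),
        q ^ ((a:ℝ) * (∑ i : Fin (k+1), x i.succ)) * Rq q (x 0) a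
            * Rq q (∑ i : Fin (k+1), x i.succ) (n - a)
        = ∑ r' ∈ (Fintype.piFinset fun _ : Fin k => Finset.range (n - a + 1)).filter
            (fun r => ∑ j, r j ≤ n - a),
          q ^ ((a:ℝ) * (∑ i : Fin (k+1), x i.succ)) * Rq q (x 0) a *
            (q ^ (∑ j : Fin k, (r' j : ℝ) *
                (∑ i ∈ Finset.univ.filter fun i : Fin (k+1) => (j:ℕ) < (i:ℕ), x i.succ)) *
             ∏ j : Fin (k+1), Rq q (x j.succ)
               ((Fin.snoc r' (n - a - ∑ i, r' i) : Fin (k+1) → ℕ) j)) := by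
      intro a _
      rw [ih (n - a) (fun i => x i.succ), Finset.mul_sum]
    rw [Finset.sum_congr rfl step1, Finset.sum_sigma'
      (Finset.range (n+1))
      (fun a => (Fintype.piFinset fun _ : Fin k => Finset.range (n - a + 1)).filter
            (fun r => ∑ j, r j ≤ n - a))]
    apply Finset.sum_nbij' (fun p => Fin.cons p.1 p.2) (fun r => ⟨r 0, fun i => r i.succ⟩)
    · rintro ⟨a, r'⟩ hp
      rw [Finset.mem_sigma] at hp
      obtain ⟨ha, hr'⟩ := hp
      rw [Finset.mem_filter, Fintype.mem_piFinset] at hr' ⊢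
      rw [Finset.mem_range] at ha
      obtain ⟨hr'1, hr'2⟩ := hr'
      constructor
      · intro j
        refine Fin.cases ?_ ?_ j
        · rw [Fin.cons_zero, Finset.mem_range]; omega
        · intro i
          rw [Fin.cons_succ, Finset.mem_range]
          have := Finset.mem_range.1 (hr'1 i)
          omega
      · rw [Fin.sum_cons]
        omega
    · intro r hr
      rw [Finset.mem_filter, Fintype.mem_piFinset] at hr
      obtain ⟨hr1, hr2⟩ := hr
      rw [Fin.sum_univ_succ] at hr2
      rw [Finset.mem_sigma, Finset.mem_range, Finset.mem_filter, Fintype.mem_piFinset]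
      dsimp only
      refine ⟨by omega, fun i => ?_, by omega⟩
      rw [Finset.mem_range]
      have hle : r i.succ ≤ ∑ i : Fin k, r i.succ :=
        Finset.single_le_sum (f := fun i : Fin k => r i.succ)
          (fun _ _ => Nat.zero_le _) (Finset.mem_univ i)
      omega
    · rintro ⟨a, r'⟩ _
      simp [Fin.cons_zero, Fin.cons_succ]
    · intro r _
      exact Fin.cons_self_tail r
    · rintro ⟨a, r'⟩ hp
      rw [Finset.mem_sigma, Finset.mem_range] at hp
      obtain ⟨ha, _⟩ := hp
      have e1 : ∑ j : Fin (k+1), (Fin.cons a r' : Fin (k+1) → ℕ) j = a + ∑ j, r' j :=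
        Fin.sum_cons a r'
      have e2 : (Fin.snoc (Fin.cons a r' : Fin (k+1) → ℕ) (n - (a + ∑ i, r' i))
          : Fin (k+2) → ℕ) = Fin.cons a (Fin.snoc r' (n - a - ∑ i, r' i)) := by
        rw [← Nat.sub_add_eq]
        exact (Fin.cons_snoc_eq_snoc_cons a r' _).symm
      have e3 : (∑ j : Fin (k+1), ((Fin.cons a r' : Fin (k+1) → ℕ) j : ℝ) *
            (∑ i ∈ Finset.univ.filter fun i : Fin (k+2) => (j:ℕ) < (i:ℕ), x i))
          = (a:ℝ) * (∑ i : Fin (k+1), x i.succ)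
            + ∑ j : Fin k, (r' j : ℝ) *
                (∑ i ∈ Finset.univ.filter fun i : Fin (k+1) => (j:ℕ) < (i:ℕ), x i.succ) := by
        rw [Fin.sum_univ_succ]
        congr 1
        · rw [Fin.cons_zero, Z_zero]
        · apply Finset.sum_congr rfl
          intro j _
          rw [Fin.cons_succ, Z_succ]
      have e4 : ∏ j : Fin (k+2), Rq q (x j)
            ((Fin.snoc (Fin.cons a r' : Fin (k+1) → ℕ)
              (n - ∑ i, (Fin.cons a r' : Fin (k+1) → ℕ) i) : Fin (k+2) → ℕ) j)
          = Rq q (x 0) a * ∏ j : Fin (k+1), Rq q (x j.succ)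
              ((Fin.snoc r' (n - a - ∑ i, r' i) : Fin (k+1) → ℕ) j) := by
        rw [e1, e2, Fin.prod_univ_succ]
        simp only [Fin.cons_zero, Fin.cons_succ]
      dsimp only
      rw [e3, e4, Real.rpow_add hq0]
      ring


lemma rpow_sum' {ι : Type*} (s : Finset ι) (f : ι → ℝ) {a : ℝ} (ha : 0 < a) :
    a ^ (∑ i ∈ s, f i) = ∏ i ∈ s, a ^ f i := by
  classical
  induction s using Finset.cons_induction with
  | empty => simp
  | cons i s hi ih => rw [Finset.sum_cons, Finset.prod_cons, Real.rpow_add ha, ih]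

lemma dnum_eq {τ₁ τ₂ : ℝ} (hτ₂ : 0 < τ₂) (hττ : τ₂ < τ₁) (z : ℝ) :
    dnum τ₁ τ₂ z = τ₁ ^ z * (1 - (τ₂/τ₁) ^ z) / (τ₁ - τ₂) := by
  have hτ₁ : 0 < τ₁ := hτ₂.trans hττ
  have h2 : τ₂ ^ z = τ₁ ^ z * (τ₂/τ₁) ^ z := by
    rw [← Real.mul_rpow hτ₁.le (by positivity)]
    congr 1
    field_simp
  rw [dnum, h2]
  ring

lemma dfall_eq {τ₁ τ₂ : ℝ} (hτ₂ : 0 < τ₂) (hττ : τ₂ < τ₁) (X : ℝ) (r : ℕ) :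
    dfall τ₁ τ₂ (X + r - 1) r
      = τ₁ ^ (∑ i ∈ Finset.range r, (X + (i:ℝ))) * Np (τ₂/τ₁) X r / (τ₁ - τ₂) ^ r := by
  have hτ₁ : 0 < τ₁ := hτ₂.trans hττ
  have h1 : dfall τ₁ τ₂ (X + r - 1) r = ∏ i ∈ Finset.range r, dnum τ₁ τ₂ (X + (i:ℝ)) := by
    rw [dfall]
    rw [← Finset.prod_range_reflect (fun j => dnum τ₁ τ₂ (X + (j:ℝ))) r]
    apply Finset.prod_congr rfl
    intro i hi
    rw [Finset.mem_range] at hi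
    congr 1
    have h2 : r - 1 - i = r - (1 + i) := by omega
    rw [h2, Nat.cast_sub (by omega)]
    push_cast
    ring
  rw [h1]
  have h3 : ∀ i ∈ Finset.range r, dnum τ₁ τ₂ (X + (i:ℝ))
      = τ₁ ^ (X + (i:ℝ)) * (1 - (τ₂/τ₁) ^ (X + (i:ℝ))) / (τ₁ - τ₂) :=
    fun i _ => dnum_eq hτ₂ hττ _
  rw [Finset.prod_congr rfl h3, Finset.prod_div_distrib, Finset.prod_const,
    Finset.card_range, Finset.prod_mul_distrib, ← rpow_sum' _ _ hτ₁]
  rfl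

lemma dfac_eq {τ₁ τ₂ : ℝ} (hτ₂ : 0 < τ₂) (hττ : τ₂ < τ₁) (r : ℕ) :
    dfac τ₁ τ₂ r
      = τ₁ ^ (∑ i ∈ Finset.range r, (1 + (i:ℝ))) * Dq (τ₂/τ₁) r / (τ₁ - τ₂) ^ r := by
  have hτ₁ : 0 < τ₂ ∧ True := ⟨hτ₂, trivial⟩
  have hτ₁' : 0 < τ₁ := hτ₂.trans hττ
  have h3 : ∀ i ∈ Finset.range r, dnum τ₁ τ₂ ((i:ℝ) + 1)
      = τ₁ ^ (1 + (i:ℝ)) * (1 - (τ₂/τ₁) ^ (1 + (i:ℝ))) / (τ₁ - τ₂) := by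
    intro i _
    rw [dnum_eq hτ₂ hττ, add_comm (1:ℝ) (i:ℝ)]
  rw [dfac, Finset.prod_congr rfl h3, Finset.prod_div_distrib, Finset.prod_const,
    Finset.card_range, Finset.prod_mul_distrib, ← rpow_sum' _ _ hτ₁']
  rfl

lemma dbinom_eq {τ₁ τ₂ : ℝ} (hτ₂ : 0 < τ₂) (hττ : τ₂ < τ₁) (X : ℝ) (r : ℕ) :
    dbinom τ₁ τ₂ (X + r - 1) r = τ₁ ^ ((r:ℝ) * (X - 1)) * Rq (τ₂/τ₁) X r := by
  have hτ₁ : 0 < τ₁ := hτ₂.trans hττ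
  have hq0 : 0 < τ₂/τ₁ := by positivity
  have hq1 : τ₂/τ₁ < 1 := (div_lt_one hτ₁).2 hττ
  have hd : 0 < Dq (τ₂/τ₁) r := Dq_pos hq0 hq1 r
  have hc : (0:ℝ) < (τ₁ - τ₂) ^ r := by
    have : (0:ℝ) < τ₁ - τ₂ := by linarith
    positivity
  have hS : τ₁ ^ (∑ i ∈ Finset.range r, (X + (i:ℝ)))
      = τ₁ ^ ((r:ℝ) * (X - 1)) * τ₁ ^ (∑ i ∈ Finset.range r, (1 + (i:ℝ))) := by
    rw [← Real.rpow_add hτ₁]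
    congr 1
    have e : ∀ i ∈ Finset.range r, X + (i:ℝ) = (X - 1) + (1 + (i:ℝ)) :=
      fun i _ => by ring
    rw [Finset.sum_congr rfl e, Finset.sum_add_distrib, Finset.sum_const,
      Finset.card_range, nsmul_eq_mul]
  have hB : (0:ℝ) < τ₁ ^ (∑ i ∈ Finset.range r, (1 + (i:ℝ))) := Real.rpow_pos_of_pos hτ₁ _
  rw [dbinom, dfall_eq hτ₂ hττ, dfac_eq hτ₂ hττ, hS, Rq]
  field_simp

lemma expo {k n : ℕ} (r : Fin k → ℕ) (hr : ∑ j, r j ≤ n) (x : Fin (k+1) → ℝ) :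
    (∑ j : Fin k, x j.castSucc * ((n:ℝ) - ((∑ i ∈ Finset.Iic j, r i : ℕ):ℝ)))
    + (∑ j : Fin k, (r j:ℝ) *
        (∑ i ∈ Finset.univ.filter fun i : Fin (k+1) => (j:ℕ) < (i:ℕ), x i))
    + (∑ j : Fin (k+1), ((Fin.snoc r (n - ∑ i, r i) : Fin (k+1) → ℕ) j : ℝ) * (x j - 1))
    = (n:ℝ) * (∑ i, x i - 1) := by
  classical
  -- swap the double sum
  have hA : (∑ j : Fin k, (r j:ℝ) *
        (∑ i ∈ Finset.univ.filter fun i : Fin (k+1) => (j:ℕ) < (i:ℕ), x i))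
      = ∑ i : Fin (k+1),
          (∑ j ∈ Finset.univ.filter (fun j : Fin k => (j:ℕ) < (i:ℕ)), (r j:ℝ)) * x i := by
    calc (∑ j : Fin k, (r j:ℝ) *
          (∑ i ∈ Finset.univ.filter fun i : Fin (k+1) => (j:ℕ) < (i:ℕ), x i))
        = ∑ j : Fin k, ∑ i : Fin (k+1),
            (if (j:ℕ) < (i:ℕ) then (r j:ℝ) else 0) * x i := by
          apply Finset.sum_congr rfl
          intro j _
          rw [Finset.sum_filter, Finset.mul_sum]
          apply Finset.sum_congr rfl
          intro i _
          split_ifs <;> ring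
      _ = ∑ i : Fin (k+1), ∑ j : Fin k,
            (if (j:ℕ) < (i:ℕ) then (r j:ℝ) else 0) * x i := Finset.sum_comm
      _ = _ := by
          apply Finset.sum_congr rfl
          intro i _
          rw [Finset.sum_filter, ← Finset.sum_mul]
  -- Iic split
  have hS : ∀ j : Fin k, ((∑ i ∈ Finset.Iic j, r i : ℕ):ℝ)
      = (r j : ℝ) + ∑ i ∈ Finset.univ.filter (fun i : Fin k => (i:ℕ) < (j:ℕ)), (r i:ℝ) := by
    intro j
    have hfil : Finset.univ.filter (fun i : Fin k => (i:ℕ) < (j:ℕ)) = Finset.Iio j := by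
      ext i
      simp only [Finset.mem_filter, Finset.mem_univ, true_and, Finset.mem_Iio, Fin.lt_def]
    have hnat : (∑ i ∈ Finset.Iic j, r i) = r j + ∑ i ∈ Finset.Iio j, r i := by
      rw [← Finset.Iio_insert j, Finset.sum_insert (by simp)]
    rw [hfil, hnat]
    push_cast
    ring
  have hfil2 : ∀ j : Fin k,
      Finset.univ.filter (fun j' : Fin k => (j':ℕ) < ((j.castSucc : Fin (k+1)):ℕ))
        = Finset.univ.filter (fun i : Fin k => (i:ℕ) < (j:ℕ)) := by
    intro j
    simp [Fin.coe_castSucc]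
  have hfil3 : Finset.univ.filter (fun j' : Fin k => (j':ℕ) < ((Fin.last k : Fin (k+1)):ℕ))
      = (Finset.univ : Finset (Fin k)) := by
    ext j
    simp [Fin.val_last, j.isLt]
  have hlast : ((n - ∑ i, r i : ℕ):ℝ) = (n:ℝ) - ∑ i : Fin k, (r i:ℝ) := by
    rw [Nat.cast_sub hr]
    push_cast
    ring
  rw [hA, Fin.sum_univ_castSucc
      (f := fun i : Fin (k+1) =>
        (∑ j ∈ Finset.univ.filter (fun j : Fin k => (j:ℕ) < (i:ℕ)), (r j:ℝ)) * x i),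
    Fin.sum_univ_castSucc
      (f := fun j : Fin (k+1) =>
        ((Fin.snoc r (n - ∑ i, r i) : Fin (k+1) → ℕ) j : ℝ) * (x j - 1)),
    Fin.sum_univ_castSucc (f := x)]
  simp only [Fin.snoc_castSucc, Fin.snoc_last, hfil2, hfil3, hlast]
  rw [Finset.sum_congr rfl (fun j _ => by rw [hS j] :
    ∀ j ∈ Finset.univ, x j.castSucc * ((n:ℝ) - ((∑ i ∈ Finset.Iic j, r i : ℕ):ℝ))
      = x j.castSucc * ((n:ℝ) - ((r j : ℝ)
          + ∑ i ∈ Finset.univ.filter (fun i : Fin k => (i:ℕ) < (j:ℕ)), (r i:ℝ))))]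
  have main : (∑ j : Fin k, x j.castSucc * ((n:ℝ) - ((r j:ℝ)
        + ∑ i ∈ Finset.univ.filter (fun i : Fin k => (i:ℕ) < (j:ℕ)), (r i:ℝ))))
      + (∑ j : Fin k,
          (∑ i ∈ Finset.univ.filter (fun i : Fin k => (i:ℕ) < (j:ℕ)), (r i:ℝ)) * x j.castSucc)
      + (∑ j : Fin k, (r j:ℝ) * (x j.castSucc - 1))
      = (n:ℝ) * (∑ j : Fin k, x j.castSucc) - ∑ j : Fin k, (r j : ℝ) := by
    rw [← Finset.sum_add_distrib, ← Finset.sum_add_distrib, Finset.mul_sum,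
      ← Finset.sum_sub_distrib]
    apply Finset.sum_congr rfl
    intro j _
    ring
  linear_combination main

/-- Multivariate deformed Cauchy formula in rising-binomial form:
`C(x₁+⋯+x_{k+1}+n−1, n) = Σ τ₁^{Σ_j x_j(n−s_j)} τ₂^{Σ_j r_j z_j}
  Π_j C(x_j+r_j−1, r_j)`, summed over tuples `(r₁,…,r_k)` with `r₁+⋯+r_k ≤ n`,
where `s_j = r₁+⋯+r_j`, `r_{k+1} = n − s_k` and `z_j = x_{j+1}+⋯+x_{k+1}`. -/
theorem deformed_multivariate_cauchy_rising
    (τ₁ τ₂ : ℝ) (hτ₂ : 0 < τ₂) (hττ : τ₂ < τ₁)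
    (n k : ℕ) (hk : 1 ≤ k) (x : Fin (k + 1) → ℝ) :
    dbinom τ₁ τ₂ (∑ i, x i + n - 1) n =
      ∑ r ∈ (Fintype.piFinset fun _ : Fin k => Finset.range (n + 1)).filter
          (fun r => ∑ j, r j ≤ n),
        τ₁ ^ (∑ j : Fin k, x j.castSucc *
            ((n : ℝ) - ((∑ i ∈ Finset.Iic j, r i : ℕ) : ℝ))) *
          τ₂ ^ (∑ j : Fin k, (r j : ℝ) *
              (∑ i ∈ Finset.univ.filter fun i : Fin (k + 1) => (j : ℕ) < (i : ℕ), x i)) *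
          ∏ j : Fin (k + 1),
            dbinom τ₁ τ₂ (x j + ((Fin.snoc r (n - ∑ i, r i) : Fin (k + 1) → ℕ) j : ℝ) - 1)
              ((Fin.snoc r (n - ∑ i, r i) : Fin (k + 1) → ℕ) j) := by
  have hτ₁ : 0 < τ₁ := hτ₂.trans hττ
  have hq0 : 0 < τ₂/τ₁ := by positivity
  have hq1 : τ₂/τ₁ < 1 := (div_lt_one hτ₁).2 hττ
  rw [dbinom_eq hτ₂ hττ (∑ i, x i) n, psi hq0 hq1 k n x, Finset.mul_sum]
  apply Finset.sum_congr rfl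
  intro r hr
  rw [Finset.mem_filter] at hr
  have hrn : ∑ j, r j ≤ n := hr.2
  have hprod : ∏ j : Fin (k+1),
        dbinom τ₁ τ₂ (x j + ((Fin.snoc r (n - ∑ i, r i) : Fin (k+1) → ℕ) j : ℝ) - 1)
          ((Fin.snoc r (n - ∑ i, r i) : Fin (k+1) → ℕ) j)
      = τ₁ ^ (∑ j : Fin (k+1), ((Fin.snoc r (n - ∑ i, r i) : Fin (k+1) → ℕ) j : ℝ) * (x j - 1))
        * ∏ j : Fin (k+1), Rq (τ₂/τ₁) (x j) ((Fin.snoc r (n - ∑ i, r i) : Fin (k+1) → ℕ) j) := by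
    rw [rpow_sum' _ _ hτ₁, ← Finset.prod_mul_distrib]
    apply Finset.prod_congr rfl
    intro j _
    exact dbinom_eq hτ₂ hττ (x j) _
  have hW : τ₂ ^ (∑ j : Fin k, (r j : ℝ) *
        (∑ i ∈ Finset.univ.filter fun i : Fin (k + 1) => (j : ℕ) < (i : ℕ), x i))
      = τ₁ ^ (∑ j : Fin k, (r j : ℝ) *
          (∑ i ∈ Finset.univ.filter fun i : Fin (k + 1) => (j : ℕ) < (i : ℕ), x i))
        * (τ₂/τ₁) ^ (∑ j : Fin k, (r j : ℝ) *
          (∑ i ∈ Finset.univ.filter fun i : Fin (k + 1) => (j : ℕ) < (i : ℕ), x i)) := by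
    rw [← Real.mul_rpow hτ₁.le hq0.le]
    congr 1
    field_simp
  rw [hprod, hW]
  have hE := expo r hrn x
  rw [← hE, Real.rpow_add hτ₁, Real.rpow_add hτ₁]
  ring
end

section
/- The multivariate deformed Pólya masses sum to unity: let 0 < τ₂ < τ₁ be reals, let m be a nonzero integer, let n, k be naturals with k ≥ 1, and let β₁, …, β_k, β be reals such that β is not equal to any of 0, 1, …, n−1. Then Σ P_{n,β,m}(y₁,…,y_k) = 1, where the sum runs over all tuples (y₁,…,y_k) of naturals with y₁ + ⋯ + y_k ≤ n. -/
open Finset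

noncomputable def Vterm (σ₁ σ₂ a b : ℝ) (M u v : ℕ) : ℝ :=
  σ₁ ^ ((u:ℝ) * (b - v)) * σ₂ ^ ((v:ℝ) * (a - u)) *
  (dfall σ₁ σ₂ (M:ℝ) u / dfac σ₁ σ₂ u) * dfall σ₁ σ₂ a u * dfall σ₁ σ₂ b v

noncomputable def Kterm (σ₁ σ₂ a b : ℝ) (N u v : ℕ) : ℝ :=
  σ₁ ^ ((u:ℝ) * (b - v) + u) * σ₂ ^ ((v:ℝ) * (a - u)) *
  (dfall σ₁ σ₂ (N:ℝ) u / dfac σ₁ σ₂ u) * dfall σ₁ σ₂ a u * dfall σ₁ σ₂ b v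


/-- summand of the multivariate identity -/
noncomputable def mterm (σ₁ σ₂ : ℝ) (N : ℕ) {k : ℕ} (B : Fin (k+1) → ℝ) (y : Fin k → ℕ) : ℝ :=
  σ₁ ^ (∑ j : Fin k, ((∑ i ∈ Finset.Iic j, y i : ℕ) : ℝ) *
        (B j.succ - ((Fin.snoc y (N - ∑ j, y j) : Fin (k+1) → ℕ) j.succ : ℝ))) *
  σ₂ ^ (∑ j : Fin k, ((N : ℝ) - ((∑ i ∈ Finset.Iic j, y i : ℕ) : ℝ)) *
        (B j.castSucc - (y j : ℝ))) *
  (dfall σ₁ σ₂ (N:ℝ) (∑ j, y j) / ∏ j, dfac σ₁ σ₂ (y j)) *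
  ∏ j : Fin (k+1), dfall σ₁ σ₂ (B j) ((Fin.snoc y (N - ∑ j, y j) : Fin (k+1) → ℕ) j)

-- helpers on Fin sums
lemma Iic_castSucc_eq {k : ℕ} (j : Fin k) :
    Finset.Iic j.castSucc = Finset.map ⟨Fin.castSucc, Fin.castSucc_injective _⟩ (Finset.Iic j) := by
  ext a
  simp only [Finset.mem_Iic, Finset.mem_map, Function.Embedding.coeFn_mk]
  constructor
  · intro ha
    have hav : a.val ≤ j.val := ha
    refine ⟨⟨a.val, by omega⟩, ?_, ?_⟩
    · exact hav
    · apply Fin.ext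
      simp
  · rintro ⟨b, hb, rfl⟩
    exact Fin.castSucc_le_castSucc_iff.2 hb

lemma sum_Iic_castSucc {M : Type*} [AddCommMonoid M] {k : ℕ} (f : Fin (k+1) → M) (j : Fin k) :
    ∑ i ∈ Finset.Iic j.castSucc, f i = ∑ i ∈ Finset.Iic j, f i.castSucc := by
  rw [Iic_castSucc_eq, Finset.sum_map]
  rfl

lemma Iic_last_eq (k : ℕ) : Finset.Iic (Fin.last k) = Finset.univ := by
  ext i; simp [Fin.le_last]

lemma sum_Iic_last {M : Type*} [AddCommMonoid M] {k : ℕ} (f : Fin (k+1) → M) :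
    ∑ i ∈ Finset.Iic (Fin.last k), f i = ∑ i, f i := by rw [Iic_last_eq]


section basic
variable {σ₁ σ₂ : ℝ} (h₁ : 0 < σ₁) (h₂ : 0 < σ₂) (hne : σ₁ ≠ σ₂)

lemma dnum_zero : dnum σ₁ σ₂ 0 = 0 := by simp [dnum]

include h₁ h₂ hne in
lemma dnum_ne_zero {x : ℝ} (hx : x ≠ 0) : dnum σ₁ σ₂ x ≠ 0 := by
  unfold dnum
  apply div_ne_zero _ (sub_ne_zero.2 hne)
  rw [sub_ne_zero]
  intro h
  have := congrArg Real.log h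
  rw [Real.log_rpow h₁, Real.log_rpow h₂] at this
  have hlog : Real.log σ₁ = Real.log σ₂ := by
    exact mul_left_cancel₀ hx this
  exact hne (Real.log_injOn_pos (Set.mem_Ioi.2 h₁) (Set.mem_Ioi.2 h₂) hlog)

include h₁ h₂ in
lemma dnum_add (u v : ℝ) :
    dnum σ₁ σ₂ (u + v) = σ₂ ^ v * dnum σ₁ σ₂ u + σ₁ ^ u * dnum σ₁ σ₂ v := by
  unfold dnum
  rw [Real.rpow_add h₁, Real.rpow_add h₂]
  ring

include h₁ h₂ in
lemma dnum_add' (u v : ℝ) :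
    dnum σ₁ σ₂ (u + v) = σ₁ ^ v * dnum σ₁ σ₂ u + σ₂ ^ u * dnum σ₁ σ₂ v := by
  unfold dnum
  rw [Real.rpow_add h₁, Real.rpow_add h₂]
  ring

lemma dfall_zero (x : ℝ) : dfall σ₁ σ₂ x 0 = 1 := by simp [dfall]

lemma dfall_succ (x : ℝ) (r : ℕ) :
    dfall σ₁ σ₂ x (r + 1) = dfall σ₁ σ₂ x r * dnum σ₁ σ₂ (x - r) := by
  simp [dfall, Finset.prod_range_succ]

lemma dfall_succ' (x : ℝ) (r : ℕ) :
    dfall σ₁ σ₂ x (r + 1) = dfall σ₁ σ₂ (x - 1) r * dnum σ₁ σ₂ x := by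
  unfold dfall
  rw [Finset.prod_range_succ']
  congr 1
  · exact Finset.prod_congr rfl fun i _ => by push_cast; ring_nf
  · simp

lemma dfall_add (x : ℝ) (r t : ℕ) :
    dfall σ₁ σ₂ x (r + t) = dfall σ₁ σ₂ x r * dfall σ₁ σ₂ (x - r) t := by
  unfold dfall
  rw [Finset.prod_range_add]
  congr 1
  exact Finset.prod_congr rfl fun i _ => by push_cast; ring_nf

lemma dfall_nat_zero {N r : ℕ} (h : N < r) : dfall σ₁ σ₂ (N : ℝ) r = 0 := by
  apply Finset.prod_eq_zero (Finset.mem_range.2 h)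
  simp [dnum]

lemma dfac_zero : dfac σ₁ σ₂ 0 = 1 := by simp [dfac]

lemma dfac_succ (r : ℕ) : dfac σ₁ σ₂ (r + 1) = dfac σ₁ σ₂ r * dnum σ₁ σ₂ (r + 1) := by
  simp [dfac, Finset.prod_range_succ]

include h₁ h₂ hne in
lemma dfac_ne_zero (r : ℕ) : dfac σ₁ σ₂ r ≠ 0 := by
  apply Finset.prod_ne_zero_iff.2
  intro i _
  exact dnum_ne_zero h₁ h₂ hne (by positivity)

include h₁ h₂ in
lemma pascal' (N u : ℕ) :
    dfall σ₁ σ₂ ((N + 1 : ℕ) : ℝ) (u + 1)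
      = σ₂ ^ ((N : ℝ) - u) * dfall σ₁ σ₂ (N : ℝ) u * dnum σ₁ σ₂ ((u : ℝ) + 1)
        + σ₁ ^ ((u : ℝ) + 1) * dfall σ₁ σ₂ (N : ℝ) (u + 1) := by
  have e1 : dfall σ₁ σ₂ ((N + 1 : ℕ) : ℝ) (u + 1)
      = dfall σ₁ σ₂ (N : ℝ) u * dnum σ₁ σ₂ ((N : ℝ) + 1) := by
    rw [show ((N + 1 : ℕ) : ℝ) = (N : ℝ) + 1 by push_cast; ring, dfall_succ']
    congr 2
    ring
  have e2 : dnum σ₁ σ₂ ((N : ℝ) + 1)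
      = σ₂ ^ ((N : ℝ) - u) * dnum σ₁ σ₂ ((u : ℝ) + 1)
        + σ₁ ^ ((u : ℝ) + 1) * dnum σ₁ σ₂ ((N : ℝ) - u) := by
    rw [show ((N : ℝ) + 1) = ((u : ℝ) + 1) + ((N : ℝ) - u) by ring] at *
    rw [dnum_add h₁ h₂]
  rw [e1, e2, dfall_succ]
  ring

include h₁ h₂ hne in
lemma pascalC (N u : ℕ) :
    dfall σ₁ σ₂ ((N + 1 : ℕ) : ℝ) (u + 1) / dfac σ₁ σ₂ (u + 1)
      = σ₂ ^ ((N : ℝ) - u) * (dfall σ₁ σ₂ (N : ℝ) u / dfac σ₁ σ₂ u)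
        + σ₁ ^ ((u : ℝ) + 1) * (dfall σ₁ σ₂ (N : ℝ) (u + 1) / dfac σ₁ σ₂ (u + 1)) := by
  have hfu : dfac σ₁ σ₂ u ≠ 0 := dfac_ne_zero h₁ h₂ hne u
  have hfu1 : dfac σ₁ σ₂ (u + 1) ≠ 0 := dfac_ne_zero h₁ h₂ hne (u + 1)
  have hd : dnum σ₁ σ₂ ((u : ℝ) + 1) ≠ 0 := dnum_ne_zero h₁ h₂ hne (by positivity)
  rw [pascal' h₁ h₂ N u]
  field_simp
  rw [dfac_succ]
  ring

lemma rpow_mul_natCast {x : ℝ} (h : 0 < x) (c : ℝ) (n : ℕ) :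
    x ^ ((n : ℝ) * c) = (x ^ c) ^ n := by
  rw [mul_comm, Real.rpow_mul h.le, Real.rpow_natCast]

include h₁ h₂ hne in
lemma stepA {N u v : ℕ} (huv : u + v = N) (a b : ℝ) :
    Vterm σ₁ σ₂ a b (N+1) (u+1) v
      = Kterm σ₁ σ₂ a b N (u+1) v
        + Vterm σ₁ σ₂ a b N u v * (σ₁ ^ (b - (v:ℝ)) * dnum σ₁ σ₂ (a - u)) := by
  have hv : (N : ℝ) - u = (v : ℝ) := by
    have : (u : ℝ) + v = N := by exact_mod_cast congrArg (Nat.cast : ℕ → ℝ) huv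
    linarith
  have expand : Vterm σ₁ σ₂ a b (N+1) (u+1) v
      = σ₁ ^ (((u+1:ℕ):ℝ) * (b - (v:ℝ))) * σ₂ ^ ((v:ℝ) * (a - ((u+1:ℕ):ℝ)))
          * σ₂ ^ ((N:ℝ) - (u:ℝ)) * (dfall σ₁ σ₂ (N:ℝ) u / dfac σ₁ σ₂ u)
          * dfall σ₁ σ₂ a (u+1) * dfall σ₁ σ₂ b v
        + σ₁ ^ (((u+1:ℕ):ℝ) * (b - (v:ℝ))) * σ₂ ^ ((v:ℝ) * (a - ((u+1:ℕ):ℝ)))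
          * σ₁ ^ ((u:ℝ) + 1) * (dfall σ₁ σ₂ (N:ℝ) (u+1) / dfac σ₁ σ₂ (u+1))
          * dfall σ₁ σ₂ a (u+1) * dfall σ₁ σ₂ b v := by
    unfold Vterm
    rw [pascalC h₁ h₂ hne N u]
    ring
  rw [expand]
  have t1 : σ₁ ^ (((u+1:ℕ):ℝ) * (b - (v:ℝ))) * σ₂ ^ ((v:ℝ) * (a - ((u+1:ℕ):ℝ)))
          * σ₂ ^ ((N:ℝ) - (u:ℝ)) * (dfall σ₁ σ₂ (N:ℝ) u / dfac σ₁ σ₂ u)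
          * dfall σ₁ σ₂ a (u+1) * dfall σ₁ σ₂ b v
      = Vterm σ₁ σ₂ a b N u v * (σ₁ ^ (b - (v:ℝ)) * dnum σ₁ σ₂ (a - u)) := by
    have m2 : σ₂ ^ ((v:ℝ) * (a - ((u+1:ℕ):ℝ))) * σ₂ ^ ((N:ℝ) - (u:ℝ))
        = σ₂ ^ ((v:ℝ) * (a - (u:ℝ))) := by
      rw [← Real.rpow_add h₂, hv]
      congr 1
      push_cast
      ring
    have m1 : σ₁ ^ (((u+1:ℕ):ℝ) * (b - (v:ℝ)))
        = σ₁ ^ ((u:ℝ) * (b - (v:ℝ))) * σ₁ ^ (b - (v:ℝ)) := by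
      rw [← Real.rpow_add h₁]
      congr 1
      push_cast
      ring
    calc σ₁ ^ (((u+1:ℕ):ℝ) * (b - (v:ℝ))) * σ₂ ^ ((v:ℝ) * (a - ((u+1:ℕ):ℝ)))
          * σ₂ ^ ((N:ℝ) - (u:ℝ)) * (dfall σ₁ σ₂ (N:ℝ) u / dfac σ₁ σ₂ u)
          * dfall σ₁ σ₂ a (u+1) * dfall σ₁ σ₂ b v
        = σ₁ ^ (((u+1:ℕ):ℝ) * (b - (v:ℝ)))
          * (σ₂ ^ ((v:ℝ) * (a - ((u+1:ℕ):ℝ))) * σ₂ ^ ((N:ℝ) - (u:ℝ)))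
          * (dfall σ₁ σ₂ (N:ℝ) u / dfac σ₁ σ₂ u)
          * dfall σ₁ σ₂ a (u+1) * dfall σ₁ σ₂ b v := by ring
      _ = _ := by
          rw [m2, m1, dfall_succ a u]
          unfold Vterm
          ring
  have t2 : σ₁ ^ (((u+1:ℕ):ℝ) * (b - (v:ℝ))) * σ₂ ^ ((v:ℝ) * (a - ((u+1:ℕ):ℝ)))
          * σ₁ ^ ((u:ℝ) + 1) * (dfall σ₁ σ₂ (N:ℝ) (u+1) / dfac σ₁ σ₂ (u+1))
          * dfall σ₁ σ₂ a (u+1) * dfall σ₁ σ₂ b v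
      = Kterm σ₁ σ₂ a b N (u+1) v := by
    unfold Kterm
    rw [Real.rpow_add h₁ (((u+1:ℕ):ℝ) * (b - (v:ℝ))) ((u+1:ℕ):ℝ),
      show ((u+1:ℕ):ℝ) = (u:ℝ) + 1 by push_cast; ring]
    ring
  rw [t1, t2]
  ring

include h₁ h₂ in
lemma stepB {N u v : ℕ} (huv : u + v = N) (a b : ℝ) :
    Kterm σ₁ σ₂ a b N u (v+1)
      = Vterm σ₁ σ₂ a b N u v * (σ₂ ^ (a - (u:ℝ)) * dnum σ₁ σ₂ (b - v)) := by
  unfold Vterm Kterm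
  rw [dfall_succ b v]
  have e1 : σ₁ ^ ((u:ℝ) * (b - ((v+1:ℕ):ℝ)) + u) = σ₁ ^ ((u:ℝ) * (b - v)) := by
    congr 1; push_cast; ring
  have e2 : σ₂ ^ (((v+1:ℕ):ℝ) * (a - u)) = σ₂ ^ ((v:ℝ) * (a - u)) * σ₂ ^ (a - (u:ℝ)) := by
    rw [← Real.rpow_add h₂]; congr 1; push_cast; ring
  rw [e1, e2]
  ring

include h₁ h₂ hne in
lemma bivarV (a b : ℝ) (N : ℕ) :
    ∑ p ∈ Finset.HasAntidiagonal.antidiagonal N, Vterm σ₁ σ₂ a b N p.1 p.2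
      = dfall σ₁ σ₂ (a + b) N := by
  induction N with
  | zero =>
    simp [Vterm, dfall_zero, dfac_zero]
  | succ N ih =>
    rw [Finset.Nat.sum_antidiagonal_succ]
    have key : ∀ p ∈ Finset.HasAntidiagonal.antidiagonal N,
        Vterm σ₁ σ₂ a b (N+1) (p.1+1) p.2
          = Kterm σ₁ σ₂ a b N (p.1+1) p.2
            + Vterm σ₁ σ₂ a b N p.1 p.2 * (σ₁ ^ (b - (p.2:ℝ)) * dnum σ₁ σ₂ (a - p.1)) :=
      fun p hp => stepA h₁ h₂ hne (Finset.HasAntidiagonal.mem_antidiagonal.1 hp) a b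
    rw [Finset.sum_congr rfl key, Finset.sum_add_distrib]
    have e0 : Vterm σ₁ σ₂ a b (N+1) 0 (N+1) = Kterm σ₁ σ₂ a b N 0 (N+1) := by
      simp [Vterm, Kterm, dfall_zero]
    rw [e0, ← add_assoc, ← Finset.Nat.sum_antidiagonal_succ
      (f := fun p => Kterm σ₁ σ₂ a b N p.1 p.2),
      Finset.Nat.sum_antidiagonal_succ' (f := fun p => Kterm σ₁ σ₂ a b N p.1 p.2)]
    have eK0 : Kterm σ₁ σ₂ a b N (N+1) 0 = 0 := by
      simp [Kterm, dfall_nat_zero (Nat.lt_succ_self N)]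
    rw [eK0, zero_add,
      Finset.sum_congr rfl (fun p hp =>
        stepB h₁ h₂ (Finset.HasAntidiagonal.mem_antidiagonal.1 hp) a b),
      ← Finset.sum_add_distrib]
    have merge : ∀ p ∈ Finset.HasAntidiagonal.antidiagonal N,
        Vterm σ₁ σ₂ a b N p.1 p.2 * (σ₂ ^ (a - (p.1:ℝ)) * dnum σ₁ σ₂ (b - p.2))
          + Vterm σ₁ σ₂ a b N p.1 p.2 * (σ₁ ^ (b - (p.2:ℝ)) * dnum σ₁ σ₂ (a - p.1))
          = Vterm σ₁ σ₂ a b N p.1 p.2 * dnum σ₁ σ₂ (a + b - N) := by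
      intro p hp
      have hp' := Finset.HasAntidiagonal.mem_antidiagonal.1 hp
      have : (a + b - (N:ℝ)) = (a - p.1) + (b - p.2) := by
        have : (p.1 : ℝ) + p.2 = N := by exact_mod_cast congrArg (Nat.cast : ℕ → ℝ) hp'
        linarith
      rw [this, dnum_add' h₁ h₂ (a - (p.1:ℝ)) (b - (p.2:ℝ))]
      ring
    rw [Finset.sum_congr rfl merge, ← Finset.sum_mul, ih, dfall_succ]

include h₁ h₂ hne in
lemma V_range (a b : ℝ) (M : ℕ) :
    ∑ t ∈ Finset.range (M+1), Vterm σ₁ σ₂ a b M t (M - t) = dfall σ₁ σ₂ (a + b) M := by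
  rw [← bivarV h₁ h₂ hne a b M,
    Finset.Nat.sum_antidiagonal_eq_sum_range_succ (fun u v => Vterm σ₁ σ₂ a b M u v)]


end basic

-- sum splitting on the pi finset
lemma sum_split {M : Type*} [AddCommMonoid M] (N k : ℕ) (f : (Fin (k+1) → ℕ) → M) :
    ∑ y ∈ (Fintype.piFinset fun _ : Fin (k+1) => Finset.range (N+1)).filter
        (fun y => ∑ j, y j ≤ N), f y
      = ∑ y' ∈ (Fintype.piFinset fun _ : Fin k => Finset.range (N+1)).filter
          (fun y => ∑ j, y j ≤ N),
          ∑ t ∈ Finset.range (N + 1 - ∑ j, y' j), f (Fin.snoc y' t) := by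
  rw [Finset.sum_sigma']
  refine Finset.sum_nbij' (i := fun (y : Fin (k+1) → ℕ) =>
      (⟨Fin.init y, y (Fin.last k)⟩ : Σ _ : Fin k → ℕ, ℕ))
    (j := fun p => (Fin.snoc p.1 p.2 : Fin (k+1) → ℕ)) ?_ ?_ ?_ ?_ ?_
  · intro y hy
    simp only [Finset.mem_sigma, Finset.mem_filter, Fintype.mem_piFinset,
      Finset.mem_range] at hy ⊢
    obtain ⟨hmem, hsum⟩ := hy
    have hsplit : ∑ j, y j = (∑ j, Fin.init y j) + y (Fin.last k) := by
      rw [Fin.sum_univ_castSucc]; rfl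
    refine ⟨⟨fun i => hmem _, ?_⟩, ?_⟩ <;> omega
  · rintro ⟨y', t⟩ hp
    simp only [Finset.mem_sigma, Finset.mem_filter, Fintype.mem_piFinset,
      Finset.mem_range] at hp ⊢
    obtain ⟨⟨hmem, hsum⟩, ht⟩ := hp
    have hsnoc : ∑ j, (Fin.snoc y' t : Fin (k+1) → ℕ) j = (∑ j, y' j) + t := by
      simp [Fin.sum_univ_castSucc]
    constructor
    · intro i
      refine Fin.lastCases ?_ ?_ i
      · simp only [Fin.snoc_last]; omega
      · intro i'; simp only [Fin.snoc_castSucc]; exact hmem i'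
    · omega
  · intro y hy
    exact Fin.snoc_init_self y
  · rintro ⟨y', t⟩ hp
    simp only
    congr 1
    · exact Fin.init_snoc ..
    · exact Fin.snoc_last ..
  · intro y hy
    rw [Fin.snoc_init_self]


section multi
variable {σ₁ σ₂ : ℝ} (h₁ : 0 < σ₁) (h₂ : 0 < σ₂) (hne : σ₁ ≠ σ₂)

include h₁ h₂ hne in
lemma core (k N : ℕ) (B : Fin (k+2) → ℝ) (y' : Fin k → ℕ) (t : ℕ)
    (hs' : ∑ j, y' j ≤ N) (ht : t ≤ N - ∑ j, y' j) :
    mterm σ₁ σ₂ N B (Fin.snoc y' t)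
      = (σ₁ ^ (∑ j : Fin k, ((∑ i ∈ Finset.Iic j, y' i : ℕ) : ℝ) *
            ((Fin.snoc (fun j : Fin k => B j.castSucc.castSucc)
                (B (Fin.last k).castSucc + B (Fin.last (k+1))) : Fin (k+1) → ℝ) j.succ
              - ((Fin.snoc y' (N - ∑ j, y' j) : Fin (k+1) → ℕ) j.succ : ℝ))) *
         σ₂ ^ (∑ j : Fin k, ((N : ℝ) - ((∑ i ∈ Finset.Iic j, y' i : ℕ) : ℝ)) *
            ((Fin.snoc (fun j : Fin k => B j.castSucc.castSucc)
                (B (Fin.last k).castSucc + B (Fin.last (k+1))) : Fin (k+1) → ℝ) j.castSucc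
              - (y' j : ℝ))) *
         (dfall σ₁ σ₂ (N:ℝ) (∑ j, y' j) / ∏ j, dfac σ₁ σ₂ (y' j)) *
         ∏ j : Fin k, dfall σ₁ σ₂ (B j.castSucc.castSucc) (y' j))
        * Vterm σ₁ σ₂ (B (Fin.last k).castSucc) (B (Fin.last (k+1)))
            (N - ∑ j, y' j) t (N - ∑ j, y' j - t) := by
  have hsnoc : (∑ j, (Fin.snoc y' t : Fin (k+1) → ℕ) j) = (∑ j, y' j) + t := by
    simp [Fin.sum_univ_castSucc]
  have K1a : ∑ j : Fin k, ((∑ i ∈ Finset.Iic j, y' i : ℕ) : ℝ) *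
        (B (j.succ).castSucc - ((Fin.snoc y' t : Fin (k+1) → ℕ) j.succ : ℝ))
      = (∑ j : Fin k, ((∑ i ∈ Finset.Iic j, y' i : ℕ) : ℝ) *
          ((Fin.snoc (fun j : Fin k => B j.castSucc.castSucc)
              (B (Fin.last k).castSucc + B (Fin.last (k+1))) : Fin (k+1) → ℝ) j.succ
            - ((Fin.snoc y' (N - ∑ j, y' j) : Fin (k+1) → ℕ) j.succ : ℝ)))
        + ((∑ j, y' j : ℕ) : ℝ) *
            (((N - ∑ j, y' j : ℕ) : ℝ) - (t : ℝ) - B (Fin.last (k+1))) := by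
    cases k with
    | zero => simp
    | succ k' =>
      rw [Fin.sum_univ_castSucc
        (f := fun j : Fin (k'+1) => ((∑ i ∈ Finset.Iic j, y' i : ℕ) : ℝ) *
          (B (j.succ).castSucc - ((Fin.snoc y' t : Fin (k'+2) → ℕ) j.succ : ℝ))),
        Fin.sum_univ_castSucc
        (f := fun j : Fin (k'+1) => ((∑ i ∈ Finset.Iic j, y' i : ℕ) : ℝ) *
          ((Fin.snoc (fun j : Fin (k'+1) => B j.castSucc.castSucc)
              (B (Fin.last (k'+1)).castSucc + B (Fin.last (k'+2))) : Fin (k'+2) → ℝ) j.succ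
            - ((Fin.snoc y' (N - ∑ j, y' j) : Fin (k'+2) → ℕ) j.succ : ℝ)))]
      simp only [Fin.succ_castSucc, Fin.snoc_castSucc, Fin.succ_last, Fin.snoc_last,
        sum_Iic_last]
      ring
  have K1 : ∑ j : Fin (k+1),
        ((∑ i ∈ Finset.Iic j, (Fin.snoc y' t : Fin (k+1) → ℕ) i : ℕ) : ℝ) *
          (B j.succ - ((Fin.snoc (Fin.snoc y' t) (N - ((∑ j, y' j) + t)) : Fin (k+2) → ℕ) j.succ : ℝ))
      = (∑ j : Fin k, ((∑ i ∈ Finset.Iic j, y' i : ℕ) : ℝ) *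
          ((Fin.snoc (fun j : Fin k => B j.castSucc.castSucc)
              (B (Fin.last k).castSucc + B (Fin.last (k+1))) : Fin (k+1) → ℝ) j.succ
            - ((Fin.snoc y' (N - ∑ j, y' j) : Fin (k+1) → ℕ) j.succ : ℝ)))
        + (t : ℝ) * (B (Fin.last (k+1)) - ((N - ∑ j, y' j - t : ℕ) : ℝ)) := by
    rw [Fin.sum_univ_castSucc]
    simp only [Fin.succ_castSucc, Fin.snoc_castSucc, Fin.succ_last, Fin.snoc_last,
      sum_Iic_castSucc, sum_Iic_last, hsnoc]
    rw [K1a]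
    have c1 : ((N - ((∑ j, y' j) + t) : ℕ) : ℝ) = (N:ℝ) - (∑ j, y' j : ℕ) - t := by
      rw [Nat.cast_sub (by omega)]; push_cast; ring
    have c2 : ((N - ∑ j, y' j - t : ℕ) : ℝ) = (N:ℝ) - (∑ j, y' j : ℕ) - t := by
      rw [Nat.cast_sub (by omega), Nat.cast_sub (by omega)]
    have c3 : ((N - ∑ j, y' j : ℕ) : ℝ) = (N:ℝ) - (∑ j, y' j : ℕ) := by
      rw [Nat.cast_sub (by omega)]
    rw [show N - ((∑ j, y' j) + t) = N - ∑ j, y' j - t by omega, c2, c3]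
    push_cast
    ring
  have K2 : ∑ j : Fin (k+1),
        ((N : ℝ) - ((∑ i ∈ Finset.Iic j, (Fin.snoc y' t : Fin (k+1) → ℕ) i : ℕ) : ℝ)) *
          (B j.castSucc - ((Fin.snoc y' t : Fin (k+1) → ℕ) j : ℝ))
      = (∑ j : Fin k, ((N : ℝ) - ((∑ i ∈ Finset.Iic j, y' i : ℕ) : ℝ)) *
          ((Fin.snoc (fun j : Fin k => B j.castSucc.castSucc)
              (B (Fin.last k).castSucc + B (Fin.last (k+1))) : Fin (k+1) → ℝ) j.castSucc
            - (y' j : ℝ)))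
        + ((N - ∑ j, y' j - t : ℕ) : ℝ) * (B (Fin.last k).castSucc - (t : ℝ)) := by
    rw [Fin.sum_univ_castSucc]
    simp only [Fin.snoc_castSucc, Fin.snoc_last, sum_Iic_castSucc, sum_Iic_last, hsnoc]
    have c2 : ((N - ∑ j, y' j - t : ℕ) : ℝ) = (N:ℝ) - (∑ j, y' j : ℕ) - t := by
      rw [Nat.cast_sub (by omega), Nat.cast_sub (by omega)]
    rw [c2]
    push_cast
    ring
  unfold mterm Vterm
  simp only [Fin.sum_snoc, hsnoc]
  rw [K1, K2]
  have R3 : dfall σ₁ σ₂ (N:ℝ) ((∑ j, y' j) + t)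
      = dfall σ₁ σ₂ (N:ℝ) (∑ j, y' j) * dfall σ₁ σ₂ ((N - ∑ j, y' j : ℕ) : ℝ) t := by
    rw [dfall_add, Nat.cast_sub hs']
  have R4 : (∏ j : Fin (k+1), dfac σ₁ σ₂ ((Fin.snoc y' t : Fin (k+1) → ℕ) j))
      = (∏ j, dfac σ₁ σ₂ (y' j)) * dfac σ₁ σ₂ t := by
    rw [Fin.prod_univ_castSucc]
    simp
  have R5 : (∏ j : Fin (k+2), dfall σ₁ σ₂ (B j)
        ((Fin.snoc (Fin.snoc y' t) (N - ((∑ j, y' j) + t)) : Fin (k+2) → ℕ) j))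
      = (∏ j : Fin k, dfall σ₁ σ₂ (B j.castSucc.castSucc) (y' j))
        * dfall σ₁ σ₂ (B (Fin.last k).castSucc) t
        * dfall σ₁ σ₂ (B (Fin.last (k+1))) (N - ∑ j, y' j - t) := by
    rw [Fin.prod_univ_castSucc, Fin.prod_univ_castSucc,
      show N - ((∑ j, y' j) + t) = N - ∑ j, y' j - t by omega]
    simp [Fin.snoc_castSucc, Fin.snoc_last]
  rw [R3, R4, R5, Real.rpow_add h₁, Real.rpow_add h₂]
  ring

include h₁ h₂ hne in
lemma inner (k N : ℕ) (B : Fin (k+2) → ℝ) (y' : Fin k → ℕ) (hs' : ∑ j, y' j ≤ N) :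
    ∑ t ∈ Finset.range (N + 1 - ∑ j, y' j), mterm σ₁ σ₂ N B (Fin.snoc y' t)
      = mterm σ₁ σ₂ N (Fin.snoc (fun j : Fin k => B j.castSucc.castSucc)
          (B (Fin.last k).castSucc + B (Fin.last (k+1)))) y' := by
  have hrange : N + 1 - ∑ j, y' j = (N - ∑ j, y' j) + 1 := by omega
  rw [hrange]
  rw [Finset.sum_congr rfl (fun t htmem => core h₁ h₂ hne k N B y' t hs'
      (by rw [Finset.mem_range] at htmem; omega))]
  rw [← Finset.mul_sum, V_range h₁ h₂ hne _ _ (N - ∑ j, y' j)]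
  unfold mterm
  rw [Fin.prod_univ_castSucc (f := fun j : Fin (k+1) =>
    dfall σ₁ σ₂ ((Fin.snoc (fun j : Fin k => B j.castSucc.castSucc)
      (B (Fin.last k).castSucc + B (Fin.last (k+1))) : Fin (k+1) → ℝ) j)
      ((Fin.snoc y' (N - ∑ j, y' j) : Fin (k+1) → ℕ) j))]
  simp only [Fin.snoc_castSucc, Fin.snoc_last]
  ring

include h₁ h₂ hne in
lemma multi : ∀ (k N : ℕ) (B : Fin (k+1) → ℝ),
    ∑ y ∈ (Fintype.piFinset fun _ : Fin k => Finset.range (N+1)).filter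
        (fun y => ∑ j, y j ≤ N), mterm σ₁ σ₂ N B y
      = dfall σ₁ σ₂ (∑ j, B j) N := by
  intro k
  induction k with
  | zero =>
    intro N B
    have hset : (Fintype.piFinset fun _ : Fin 0 => Finset.range (N+1)).filter
        (fun y => ∑ j, y j ≤ N) = {fun i : Fin 0 => i.elim0} := by
      ext y
      simp only [Finset.mem_filter, Fintype.mem_piFinset, Finset.mem_singleton]
      constructor
      · intro _; funext i; exact i.elim0
      · intro h; subst h; simp
    rw [hset, Finset.sum_singleton]
    unfold mterm
    simp only [Fin.sum_univ_zero, Fin.prod_univ_zero, Real.rpow_zero, one_mul,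
      Nat.sub_zero, Fin.sum_univ_one, Fin.prod_univ_one, div_one]
    rw [Fin.prod_univ_one, Fin.sum_univ_one,
      show (0 : Fin (0+1)) = Fin.last 0 from rfl, Fin.snoc_last, dfall_zero, one_mul]
  | succ k ih =>
    intro N B
    rw [sum_split N k (mterm σ₁ σ₂ N B),
      Finset.sum_congr rfl (fun y' hy' => inner h₁ h₂ hne k N B y'
        (by simpa using (Finset.mem_filter.1 hy').2)),
      ih N (Fin.snoc (fun j : Fin k => B j.castSucc.castSucc)
        (B (Fin.last k).castSucc + B (Fin.last (k+1))))]
    congr 1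
    rw [Fin.sum_univ_castSucc (f := fun j : Fin (k+1) =>
      (Fin.snoc (fun j : Fin k => B j.castSucc.castSucc)
        (B (Fin.last k).castSucc + B (Fin.last (k+1))) : Fin (k+1) → ℝ) j),
      Fin.sum_univ_castSucc (f := B),
      Fin.sum_univ_castSucc (f := fun j : Fin (k+1) => B j.castSucc)]
    simp only [Fin.snoc_castSucc, Fin.snoc_last]
    ring

end multi

lemma zpow_rpow_convert {x : ℝ} (hx : 0 < x) (m : ℤ) (A : ℝ) :
    x ^ (-(m:ℝ) * A) = ((x ^ (-m) : ℝ) : ℝ) ^ A := by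
  rw [show -(m:ℝ) * A = ((-m : ℤ) : ℝ) * A by push_cast; ring,
    Real.rpow_mul hx.le, Real.rpow_intCast]

/-- The `k`-variate deformed Pólya mass with parameters `n`, `(β₁,…,β_k)`, `β`
and nonzero integer `m`, built from `σ = (τ₁^{−m}, τ₂^{−m})`: for a tuple
`(y₁,…,y_k)` with `y₁+⋯+y_k ≤ n`, writing `y_{k+1} = n − (y₁+⋯+y_k)`,
`β_{k+1} = β − (β₁+⋯+β_k)` and `x_j = y₁+⋯+y_j`, it equals
`τ₁^{−m Σ_j x_j(β_{j+1}−y_{j+1})} τ₂^{−m Σ_j (n−x_j)(β_j−y_j)}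
  M_σ(n; y₁,…,y_k) (Π_{j=1}^{k+1} [β_j]_{y_j,σ}) / [β]_{n,σ}`. -/
noncomputable def polyaMass (τ₁ τ₂ : ℝ) (m : ℤ) (n : ℕ) {k : ℕ}
    (βv : Fin k → ℝ) (β : ℝ) (y : Fin k → ℕ) : ℝ :=
  let σ₁ : ℝ := τ₁ ^ (-m)
  let σ₂ : ℝ := τ₂ ^ (-m)
  let Y : Fin (k + 1) → ℕ := Fin.snoc y (n - ∑ j, y j)
  let B : Fin (k + 1) → ℝ := Fin.snoc βv (β - ∑ j, βv j)
  let X : Fin k → ℕ := fun j => ∑ i ∈ Finset.Iic j, y i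
  τ₁ ^ (-(m : ℝ) * ∑ j : Fin k, (X j : ℝ) * (B j.succ - (Y j.succ : ℝ))) *
    τ₂ ^ (-(m : ℝ) * ∑ j : Fin k, ((n : ℝ) - (X j : ℝ)) * (βv j - (y j : ℝ))) *
    dmulti σ₁ σ₂ (n : ℝ) y *
    (∏ j : Fin (k + 1), dfall σ₁ σ₂ (B j) (Y j)) / dfall σ₁ σ₂ β n

lemma polya_eq_mterm (τ₁ τ₂ : ℝ) (hτ₁ : 0 < τ₁) (hτ₂ : 0 < τ₂) (m : ℤ) (n : ℕ)
    {k : ℕ} (βv : Fin k → ℝ) (β : ℝ) (y : Fin k → ℕ) :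
    polyaMass τ₁ τ₂ m n βv β y
      = mterm (τ₁ ^ (-m)) (τ₂ ^ (-m)) n (Fin.snoc βv (β - ∑ j, βv j)) y
        / dfall (τ₁ ^ (-m)) (τ₂ ^ (-m)) β n := by
  unfold polyaMass mterm dmulti
  simp only [Fin.snoc_castSucc]
  rw [zpow_rpow_convert hτ₁, zpow_rpow_convert hτ₂]

/-- The multivariate deformed Pólya masses sum to unity: if `β` avoids
`0,1,…,n−1`, then `Σ P_{n,β,m}(y₁,…,y_k) = 1`, the sum running over all
tuples `(y₁,…,y_k)` of naturals with `y₁+⋯+y_k ≤ n`. -/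
theorem deformed_polya_sum_to_one
    (τ₁ τ₂ : ℝ) (hτ₂ : 0 < τ₂) (hττ : τ₂ < τ₁) (m : ℤ) (hm : m ≠ 0)
    (n k : ℕ) (hk : 1 ≤ k) (βv : Fin k → ℝ) (β : ℝ)
    (hβ : ∀ i : ℕ, i < n → β ≠ i) :
    ∑ y ∈ (Fintype.piFinset fun _ : Fin k => Finset.range (n + 1)).filter
        (fun y => ∑ j, y j ≤ n),
      polyaMass τ₁ τ₂ m n βv β y = 1 := by
  have hτ₁ : 0 < τ₁ := lt_trans hτ₂ hττ
  set σ₁ : ℝ := τ₁ ^ (-m) with hσ₁def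
  set σ₂ : ℝ := τ₂ ^ (-m) with hσ₂def
  have h₁ : 0 < σ₁ := zpow_pos hτ₁ _
  have h₂ : 0 < σ₂ := zpow_pos hτ₂ _
  have hne : σ₁ ≠ σ₂ := by
    intro h
    rw [hσ₁def, hσ₂def, ← Real.rpow_intCast τ₁, ← Real.rpow_intCast τ₂] at h
    have hlog := congrArg Real.log h
    rw [Real.log_rpow hτ₁, Real.log_rpow hτ₂] at hlog
    have hc : ((-m : ℤ) : ℝ) ≠ 0 := by exact_mod_cast neg_ne_zero.2 hm
    have hll : Real.log τ₁ = Real.log τ₂ := mul_left_cancel₀ hc hlog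
    have := Real.log_injOn_pos (Set.mem_Ioi.2 hτ₁) (Set.mem_Ioi.2 hτ₂) hll
    exact absurd this (ne_of_gt hττ)
  have hden : dfall σ₁ σ₂ β n ≠ 0 := by
    unfold dfall
    rw [Finset.prod_ne_zero_iff]
    intro i hi
    apply dnum_ne_zero h₁ h₂ hne
    rw [Finset.mem_range] at hi
    have := hβ i hi
    intro hzero
    apply this
    linarith [sub_eq_zero.1 hzero]
  have hsumB : (∑ j : Fin (k+1), (Fin.snoc βv (β - ∑ j, βv j) : Fin (k+1) → ℝ) j) = β := by
    rw [Fin.sum_snoc]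
    ring
  calc ∑ y ∈ (Fintype.piFinset fun _ : Fin k => Finset.range (n + 1)).filter
        (fun y => ∑ j, y j ≤ n), polyaMass τ₁ τ₂ m n βv β y
      = ∑ y ∈ (Fintype.piFinset fun _ : Fin k => Finset.range (n + 1)).filter
          (fun y => ∑ j, y j ≤ n),
          mterm σ₁ σ₂ n (Fin.snoc βv (β - ∑ j, βv j)) y / dfall σ₁ σ₂ β n :=
        Finset.sum_congr rfl fun y _ => polya_eq_mterm τ₁ τ₂ hτ₁ hτ₂ m n βv β y
    _ = (∑ y ∈ (Fintype.piFinset fun _ : Fin k => Finset.range (n + 1)).filter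
          (fun y => ∑ j, y j ≤ n),
          mterm σ₁ σ₂ n (Fin.snoc βv (β - ∑ j, βv j)) y) / dfall σ₁ σ₂ β n := by
        rw [Finset.sum_div]
    _ = dfall σ₁ σ₂ (∑ j : Fin (k+1), (Fin.snoc βv (β - ∑ j, βv j) : Fin (k+1) → ℝ) j) n
          / dfall σ₁ σ₂ β n := by
        rw [multi h₁ h₂ hne k n]
    _ = 1 := by rw [hsumB, div_self hden]
end

section
/- Conditional distribution of independent deformed binomial variables given their sum is multivariate deformed hypergeometric: let 0 < τ₂ < τ₁ be reals and θ > 0. For naturals r, s define the deformed binomial mass b_{r,s}(h) = C(r,h) · θ^h · τ₁^{s(r−h) + C(r−h,2)} · τ₂^{s h + C(h,2)} / ∏_{i=0}^{r−1}(τ₁^{s+i} + θ τ₂^{s+i}) for 0 ≤ h ≤ r, where C(t,2) = t(t−1)/2 in the exponents. Let k ≥ 1, let r₁, …, r_{k+1} be naturals with r = r₁ + ⋯ + r_{k+1} and s_j = r₁ + ⋯ + r_j (s₀ = 0), and let h₁, …, h_{k+1} be naturals with h_j ≤ r_j for all j and h₁ + ⋯ + h_{k+1} = n. Then (∏_{j=1}^{k+1}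 b_{r_j, s_{j−1}}(h_j)) / b_{r,0}(n) = τ₁^{Σ_{j=1}^{k} h_j(z_j − (n − ȳ_j))} · τ₂^{Σ_{j=1}^{k} (n − ȳ_j)(r_j − h_j)} · (∏_{j=1}^{k+1} C(r_j, h_j)) / C(r, n), where z_j = r_{j+1} + ⋯ + r_{k+1} and ȳ_j = h₁ + ⋯ + h_j. -/
open Finset

/-- The deformed binomial mass of the first kind with parameters `r`, `s`, `θ`:
`b_{r,s}(h) = C(r,h) θ^h τ₁^{s(r−h)+C(r−h,2)} τ₂^{sh+C(h,2)}
  / Π_{i=0}^{r−1}(τ₁^{s+i} + θ τ₂^{s+i})`. -/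
noncomputable def binMass (τ₁ τ₂ θ : ℝ) (r s h : ℕ) : ℝ :=
  dbinom τ₁ τ₂ (r : ℝ) h * θ ^ h * τ₁ ^ (s * (r - h) + (r - h).choose 2) *
    τ₂ ^ (s * h + h.choose 2) /
    ∏ i ∈ Finset.range r, (τ₁ ^ (s + i) + θ * τ₂ ^ (s + i))


lemma aux_dnum_pos {τ₁ τ₂ : ℝ} (hτ₂ : 0 < τ₂) (hττ : τ₂ < τ₁) {x : ℝ} (hx : 0 < x) :
    0 < dnum τ₁ τ₂ x := by
  have h := Real.rpow_lt_rpow hτ₂.le hττ hx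
  exact div_pos (by linarith) (by linarith)

lemma aux_Iio_filter {m : ℕ} (j : Fin m) : Iio j = univ.filter (fun i => i < j) := by
  ext i; simp

lemma aux_Ioi_filter {m : ℕ} (j : Fin m) : Ioi j = univ.filter (fun i => j < i) := by
  ext i; simp

lemma aux_sum_Iio_comm {m : ℕ} (F G : Fin m → ℝ) :
    ∑ j, (∑ i ∈ Iio j, F i) * G j = ∑ i, F i * (∑ j ∈ Ioi i, G j) := by
  simp_rw [Finset.sum_mul, Finset.mul_sum, aux_Iio_filter, aux_Ioi_filter,
    Finset.sum_filter]
  exact Finset.sum_comm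

lemma aux_sum_split {m : ℕ} (j : Fin m) (f : Fin m → ℝ) :
    ∑ i, f i = (∑ i ∈ Iic j, f i) + ∑ i ∈ Ioi j, f i := by
  rw [show (univ : Finset (Fin m)) = Iic j ∪ Ioi j by ext i; simp [le_or_gt],
    Finset.sum_union]
  rw [Finset.disjoint_left]
  intro i hi hi'
  simp only [mem_Iic] at hi
  simp only [mem_Ioi] at hi'
  exact absurd hi' (not_lt.2 hi)
lemma aux_sq_sum {m : ℕ} (b : Fin m → ℝ) :
    (∑ j, b j) * (∑ j, b j) = (∑ j, b j * b j) + 2 * ∑ j, (∑ i ∈ Iio j, b i) * b j := by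
  have h1 : ∀ j : Fin m, (∑ i, b i) = (∑ i ∈ Iio j, b i) + b j + ∑ i ∈ Ioi j, b i := by
    intro j
    rw [aux_sum_split j b, ← Finset.Iio_insert, Finset.sum_insert (by simp)]
    ring
  calc (∑ j, b j) * (∑ j, b j) = ∑ j, (∑ i, b i) * b j := by rw [Finset.mul_sum]
    _ = ∑ j, ((∑ i ∈ Iio j, b i) * b j + b j * b j + b j * (∑ i ∈ Ioi j, b i)) := by
        apply Finset.sum_congr rfl; intro j _; rw [h1 j]; ring
    _ = _ := by
        rw [Finset.sum_add_distrib, Finset.sum_add_distrib, ← aux_sum_Iio_comm b b]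
        ring

/-- The key exponent identity. -/
lemma aux_key {m : ℕ} (a b : Fin m → ℝ) :
    ∑ j, ((∑ i ∈ Iio j, (a i + b i)) * b j + b j * (b j - 1) / 2)
      = (∑ j, b j) * ((∑ j, b j) - 1) / 2 + ∑ j, a j * (∑ i ∈ Ioi j, b i) := by
  have h1 : ∑ j, ((∑ i ∈ Iio j, (a i + b i)) * b j + b j * (b j - 1) / 2)
      = (∑ j, (∑ i ∈ Iio j, a i) * b j) + (∑ j, (∑ i ∈ Iio j, b i) * b j)
        + ((∑ j, b j * b j) - (∑ j, b j)) / 2 := by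
    rw [← Finset.sum_sub_distrib, Finset.sum_div, ← Finset.sum_add_distrib,
      ← Finset.sum_add_distrib]
    apply Finset.sum_congr rfl
    intro j _
    rw [Finset.sum_add_distrib]
    ring
  rw [h1, aux_sum_Iio_comm a b]
  linear_combination -(aux_sq_sum b) / 2
lemma aux_prod_split (f : ℕ → ℝ) : ∀ (m : ℕ) (g : Fin m → ℕ),
    (∏ j : Fin m, ∏ i ∈ range (g j), f ((∑ i' ∈ Iio j, g i') + i)) =
    ∏ i ∈ range (∑ j, g j), f i := by
  intro m
  induction m with
  | zero => simp
  | succ m ih =>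
    intro g
    rw [Fin.prod_univ_castSucc, Fin.sum_univ_castSucc, Finset.prod_range_add]
    congr 1
    · rw [← ih (fun j => g j.castSucc)]
      apply Finset.prod_congr rfl
      intro j _
      have : ∑ i' ∈ Iio j.castSucc, g i' = ∑ i' ∈ Iio j, g i'.castSucc := by
        rw [Fin.Iio_castSucc, Finset.sum_map]
        rfl
      rw [this]
    · have : ∑ i' ∈ Iio (Fin.last m), g i' = ∑ j : Fin m, g j.castSucc := by
        rw [Fin.Iio_last_eq_map, Finset.sum_map]
        rfl
      rw [this]

lemma aux_dfac_pos {τ₁ τ₂ : ℝ} (hτ₂ : 0 < τ₂) (hττ : τ₂ < τ₁) (r : ℕ) :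
    0 < dfac τ₁ τ₂ r := by
  apply Finset.prod_pos
  intro j _
  exact aux_dnum_pos hτ₂ hττ (by positivity)

lemma aux_dfall_pos {τ₁ τ₂ : ℝ} (hτ₂ : 0 < τ₂) (hττ : τ₂ < τ₁) {m h : ℕ} (hle : h ≤ m) :
    0 < dfall τ₁ τ₂ (m : ℝ) h := by
  apply Finset.prod_pos
  intro j hj
  apply aux_dnum_pos hτ₂ hττ
  have : j < m := lt_of_lt_of_le (Finset.mem_range.mp hj) hle
  have : (j : ℝ) < (m : ℝ) := by exact_mod_cast this
  linarith

lemma aux_dbinom_pos {τ₁ τ₂ : ℝ} (hτ₂ : 0 < τ₂) (hττ : τ₂ < τ₁) {m h : ℕ} (hle : h ≤ m) :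
    0 < dbinom τ₁ τ₂ (m : ℝ) h :=
  div_pos (aux_dfall_pos hτ₂ hττ hle) (aux_dfac_pos hτ₂ hττ h)

/-- Conditional distribution of independent deformed binomial variables given
their sum is multivariate deformed hypergeometric:
`(Π_{j=1}^{k+1} b_{r_j,s_{j−1}}(h_j)) / b_{r,0}(n)
  = τ₁^{Σ_j h_j(z_j−(n−ȳ_j))} τ₂^{Σ_j (n−ȳ_j)(r_j−h_j)}
    (Π_j C(r_j,h_j)) / C(r,n)`,
where `r = r₁+⋯+r_{k+1}`, `s_j = r₁+⋯+r_j`, `z_j = r_{j+1}+⋯+r_{k+1}`,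
`ȳ_j = h₁+⋯+h_j`, `h_j ≤ r_j` and `h₁+⋯+h_{k+1} = n`. -/
theorem deformed_binomial_conditional_hypergeometric
    (τ₁ τ₂ : ℝ) (hτ₂ : 0 < τ₂) (hττ : τ₂ < τ₁) (θ : ℝ) (hθ : 0 < θ)
    (k n : ℕ) (hk : 1 ≤ k) (r hv : Fin (k + 1) → ℕ)
    (hle : ∀ j, hv j ≤ r j) (hn : ∑ j, hv j = n) :
    (∏ j : Fin (k + 1), binMass τ₁ τ₂ θ (r j) (∑ i ∈ Finset.Iio j, r i) (hv j)) /
        binMass τ₁ τ₂ θ (∑ j, r j) 0 n =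
      τ₁ ^ (∑ j : Fin k, (hv j.castSucc : ℝ) *
          ((∑ i ∈ Finset.univ.filter fun i : Fin (k + 1) => (j : ℕ) < (i : ℕ), (r i : ℝ)) -
            ((n : ℝ) - (∑ i ∈ Finset.Iic j.castSucc, (hv i : ℝ))))) *
        τ₂ ^ (∑ j : Fin k, ((n : ℝ) - (∑ i ∈ Finset.Iic j.castSucc, (hv i : ℝ))) *
            ((r j.castSucc : ℝ) - (hv j.castSucc : ℝ))) *
        (∏ j : Fin (k + 1), dbinom τ₁ τ₂ (r j : ℝ) (hv j)) /
        dbinom τ₁ τ₂ ((∑ j, r j : ℕ) : ℝ) n := by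
  have hτ₁ : 0 < τ₁ := hτ₂.trans hττ
  set R := ∑ j, r j with hR
  have hnR : n ≤ R := by
    rw [← hn, hR]; exact Finset.sum_le_sum fun j _ => hle j
  set a : Fin (k+1) → ℝ := fun j => (hv j : ℝ) with ha
  set b : Fin (k+1) → ℝ := fun j => (r j : ℝ) - (hv j : ℝ) with hb
  have hsuma : ∑ j, a j = (n : ℝ) := by rw [ha, ← hn]; push_cast; rfl
  have hsumb : ∑ j, b j = (R : ℝ) - (n : ℝ) := by
    rw [hb, Finset.sum_sub_distrib, ← hn, hR]; push_cast; ring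
  set A := ∑ j, ((∑ i ∈ Iio j, r i) * (r j - hv j) + (r j - hv j).choose 2) with hA
  set B := ∑ j, ((∑ i ∈ Iio j, r i) * hv j + (hv j).choose 2) with hB
  set D := ∏ i ∈ range R, (τ₁ ^ i + θ * τ₂ ^ i) with hD
  set P := ∏ j, dbinom τ₁ τ₂ (r j : ℝ) (hv j) with hP
  set Q := dbinom τ₁ τ₂ (R : ℝ) n with hQ
  -- Step 1: numerator product
  have step1 : (∏ j, binMass τ₁ τ₂ θ (r j) (∑ i ∈ Iio j, r i) (hv j))
      = P * θ ^ n * τ₁ ^ A * τ₂ ^ B / D := by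
    simp only [binMass]
    rw [Finset.prod_div_distrib, Finset.prod_mul_distrib, Finset.prod_mul_distrib,
      Finset.prod_mul_distrib, Finset.prod_pow_eq_pow_sum, Finset.prod_pow_eq_pow_sum,
      Finset.prod_pow_eq_pow_sum, hn, ← hA, ← hB, ← hP]
    congr 1
    rw [hD, hR]
    exact aux_prod_split (fun i => τ₁ ^ i + θ * τ₂ ^ i) (k+1) r
  -- Step 2: denominator mass
  have step2 : binMass τ₁ τ₂ θ R 0 n
      = Q * θ ^ n * τ₁ ^ ((R - n).choose 2) * τ₂ ^ (n.choose 2) / D := by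
    simp only [binMass, Nat.zero_mul, Nat.zero_add, zero_add, hQ, hD]
  -- Exponent identities
  have hAc : (A : ℝ) = ∑ j, ((∑ i ∈ Iio j, (a i + b i)) * b j + b j * (b j - 1) / 2) := by
    rw [hA]
    push_cast
    apply Finset.sum_congr rfl
    intro j _
    rw [Nat.cast_sub (hle j), Nat.cast_choose_two, Nat.cast_sub (hle j)]
    have : ∀ i : Fin (k+1), a i + b i = (r i : ℝ) := by intro i; rw [ha, hb]; ring
    simp only [this, ha, hb, add_sub_cancel]
  have hBc : (B : ℝ) = ∑ j, ((∑ i ∈ Iio j, (b i + a i)) * a j + a j * (a j - 1) / 2) := by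
    rw [hB]
    push_cast
    apply Finset.sum_congr rfl
    intro j _
    rw [Nat.cast_choose_two]
    have : ∀ i : Fin (k+1), b i + a i = (r i : ℝ) := by intro i; rw [ha, hb]; ring
    simp only [this, ha, hb, sub_add_cancel]
  have hC1 : (((R - n).choose 2 : ℕ) : ℝ) = (∑ j, b j) * ((∑ j, b j) - 1) / 2 := by
    rw [Nat.cast_choose_two, Nat.cast_sub hnR, hsumb]
  have hC2 : ((n.choose 2 : ℕ) : ℝ) = (∑ j, a j) * ((∑ j, a j) - 1) / 2 := by
    rw [Nat.cast_choose_two, hsuma]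
  have hlast : (Ioi (Fin.last k) : Finset (Fin (k+1))) = ∅ := by
    ext i
    simp only [mem_Ioi, Finset.notMem_empty, iff_false, not_lt]
    exact Fin.le_last i
  have hfilter : ∀ j : Fin k,
      (univ.filter fun i : Fin (k+1) => (j : ℕ) < (i : ℕ)) = Ioi j.castSucc := by
    intro j
    ext i
    simp [Fin.lt_def]
  have hIicIoi : ∀ (f : Fin (k+1) → ℝ) (j : Fin (k+1)),
      (∑ i, f i) - ∑ i ∈ Iic j, f i = ∑ i ∈ Ioi j, f i := by
    intro f j
    rw [aux_sum_split j f]; ring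
  -- E₁
  have hE1 : (∑ j : Fin k, (hv j.castSucc : ℝ) *
        ((∑ i ∈ Finset.univ.filter fun i : Fin (k + 1) => (j : ℕ) < (i : ℕ), (r i : ℝ)) -
          ((n : ℝ) - (∑ i ∈ Finset.Iic j.castSucc, (hv i : ℝ)))))
      = (A : ℝ) - (((R - n).choose 2 : ℕ) : ℝ) := by
    rw [hAc, aux_key a b, hC1]
    have h1 : ∀ j : Fin k, (hv j.castSucc : ℝ) *
        ((∑ i ∈ Finset.univ.filter fun i : Fin (k + 1) => (j : ℕ) < (i : ℕ), (r i : ℝ)) -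
          ((n : ℝ) - (∑ i ∈ Finset.Iic j.castSucc, (hv i : ℝ))))
        = a j.castSucc * (∑ i ∈ Ioi j.castSucc, b i) := by
      intro j
      rw [hfilter j, ← hsuma, hIicIoi a j.castSucc]
      have : ∑ i ∈ Ioi j.castSucc, b i
          = (∑ i ∈ Ioi j.castSucc, (r i : ℝ)) - ∑ i ∈ Ioi j.castSucc, a i := by
        rw [← Finset.sum_sub_distrib]
      rw [this, ha]
    rw [Finset.sum_congr rfl fun j _ => h1 j]
    rw [Fin.sum_univ_castSucc (f := fun j => a j * (∑ i ∈ Ioi j, b i)), hlast]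
    simp
  -- E₂
  have hE2 : (∑ j : Fin k, ((n : ℝ) - (∑ i ∈ Finset.Iic j.castSucc, (hv i : ℝ))) *
        ((r j.castSucc : ℝ) - (hv j.castSucc : ℝ)))
      = (B : ℝ) - ((n.choose 2 : ℕ) : ℝ) := by
    rw [hBc, aux_key b a, hC2]
    have h1 : ∀ j : Fin k, ((n : ℝ) - (∑ i ∈ Finset.Iic j.castSucc, (hv i : ℝ))) *
        ((r j.castSucc : ℝ) - (hv j.castSucc : ℝ))
        = b j.castSucc * (∑ i ∈ Ioi j.castSucc, a i) := by
      intro j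
      rw [← hsuma, hIicIoi a j.castSucc, hb]
      ring
    rw [Finset.sum_congr rfl fun j _ => h1 j]
    rw [Fin.sum_univ_castSucc (f := fun j => b j * (∑ i ∈ Ioi j, a i)), hlast]
    simp
  -- positivity
  have hDne : D ≠ 0 := by
    have : 0 < D := by
      rw [hD]; exact Finset.prod_pos fun i _ => by positivity
    exact this.ne'
  have hQne : Q ≠ 0 := (aux_dbinom_pos hτ₂ hττ hnR).ne'
  have hθne : θ ≠ 0 := hθ.ne'
  have hτ₁ne : τ₁ ≠ 0 := hτ₁.ne'
  have hτ₂ne : τ₂ ≠ 0 := hτ₂.ne'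
  rw [step1, step2, hE1, hE2, Real.rpow_sub hτ₁, Real.rpow_sub hτ₂,
    Real.rpow_natCast, Real.rpow_natCast, Real.rpow_natCast, Real.rpow_natCast]
  field_simp
end

section
/- Conditional distribution of independent deformed negative binomial variables given their sum is multivariate negative deformed hypergeometric: let 0 < τ₂ < τ₁ be reals and 0 < θ < 1. For naturals r ≥ 1 and s define the deformed negative binomial mass g_{r,s}(v) = C(r+v−1, v) · θ^v · τ₂^{s v} · τ₁^{−v(r+s−1)} · ∏_{i=0}^{r−1}(1 − θ(τ₂/τ₁)^{s+i}) for v ∈ ℕ. Let k ≥ 1, let r₁, …, r_{k+1} be naturals each ≥ 1 with r = r₁ + ⋯ + r_{k+1} and s_j = r₁ + ⋯ + r_j (s₀ = 0), and let v₁, …, v_{k+1} be naturals with v₁ + ⋯ + v_{k+1} = n. Then (∏_{j=1}^{k+1} g_{r_j, s_{j−1}}(v_j)) / g_{r,0}(n) = τ₁^{Σ_{j=1}^{k} v_j z_j} · τ₂^{Σ_{j=1}^{k} r_j(n − v̄_j)} · (∏_{j=1}^{k+1} C(r_j + v_j − 1, v_j)) / C(r + n − 1, n), where z_j = r_{j+1}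 + ⋯ + r_{k+1} and v̄_j = v₁ + ⋯ + v_j. -/
open Finset

/-- The deformed negative binomial mass of the second kind with parameters
`r ≥ 1`, `s`, `θ`:
`g_{r,s}(v) = C(r+v−1,v) θ^v τ₂^{sv} τ₁^{−v(r+s−1)}
  Π_{i=0}^{r−1}(1 − θ(τ₂/τ₁)^{s+i})`. -/
noncomputable def negBinMass (τ₁ τ₂ θ : ℝ) (r s v : ℕ) : ℝ :=
  dbinom τ₁ τ₂ ((r : ℝ) + (v : ℝ) - 1) v * θ ^ v * τ₂ ^ (s * v) *
    τ₁ ^ (-((v * (r + s - 1) : ℕ) : ℤ)) *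
    ∏ i ∈ Finset.range r, (1 - θ * (τ₂ / τ₁) ^ (s + i))

private lemma split_sum {m : ℕ} (f : Fin m → ℕ) (c : Fin m) :
    ∑ i ∈ Iic c, f i + ∑ i ∈ Ioi c, f i = ∑ i, f i := by
  rw [← Finset.filter_ge_eq_Iic, ← Finset.filter_lt_eq_Ioi]
  rw [show (filter (fun x => c < x) univ : Finset (Fin m)) = filter (fun x => ¬ x ≤ c) univ from
    by ext; simp [not_le]]
  exact Finset.sum_filter_add_sum_filter_not _ _ _

private lemma swap_sum {m : ℕ} (a b : Fin m → ℕ) :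
    ∑ j, (∑ i ∈ Iio j, a i) * b j = ∑ i, a i * ∑ j ∈ Ioi i, b j := by
  simp only [Finset.sum_mul, Finset.mul_sum]
  calc ∑ j, ∑ i ∈ Iio j, a i * b j
      = ∑ j, ∑ i, if i < j then a i * b j else 0 := by
        refine Finset.sum_congr rfl fun j _ => ?_
        rw [← Finset.filter_gt_eq_Iio, Finset.sum_filter]
    _ = ∑ i, ∑ j, if i < j then a i * b j else 0 := Finset.sum_comm
    _ = ∑ i, ∑ j ∈ Ioi i, a i * b j := by
        refine Finset.sum_congr rfl fun i _ => ?_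
        rw [← Finset.filter_lt_eq_Ioi, Finset.sum_filter]

private lemma tele_prod {M : Type*} [CommMonoid M] (f : ℕ → M) :
    ∀ (m : ℕ) (r : Fin m → ℕ),
      (∏ j, ∏ i ∈ range (r j), f ((∑ t ∈ Iio j, r t) + i))
        = ∏ i ∈ range (∑ j, r j), f i := by
  intro m
  induction m with
  | zero => intro r; simp
  | succ m ih =>
      intro r
      rw [Fin.prod_univ_castSucc, Fin.sum_univ_castSucc, Finset.prod_range_add,
        ← ih (fun j => r j.castSucc)]
      congr 1
      · refine Finset.prod_congr rfl fun j _ => ?_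
        rw [Fin.Iio_castSucc, Finset.sum_map]
        rfl
      · rw [Fin.Iio_last_eq_map, Finset.sum_map]
        rfl

private lemma sum_Iic_split {m : ℕ} (f : Fin m → ℕ) (c : Fin m) :
    ∑ i ∈ Iic c, f i = (∑ i ∈ Iio c, f i) + f c := by
  rw [← Finset.Iio_insert, Finset.sum_insert (by simp)]
  ring

/-- Conditional distribution of independent deformed negative binomial
variables given their sum is multivariate negative deformed hypergeometric:
`(Π_{j=1}^{k+1} g_{r_j,s_{j−1}}(v_j)) / g_{r,0}(n)
  = τ₁^{Σ_j v_j z_j} τ₂^{Σ_j r_j(n−v̄_j)}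
    (Π_j C(r_j+v_j−1, v_j)) / C(r+n−1, n)`,
where `r = r₁+⋯+r_{k+1}`, each `r_j ≥ 1`, `s_j = r₁+⋯+r_j`,
`z_j = r_{j+1}+⋯+r_{k+1}`, `v̄_j = v₁+⋯+v_j` and `v₁+⋯+v_{k+1} = n`. -/
theorem deformed_negative_binomial_conditional_hypergeometric
    (τ₁ τ₂ : ℝ) (hτ₂ : 0 < τ₂) (hττ : τ₂ < τ₁) (θ : ℝ) (hθ₀ : 0 < θ) (hθ₁ : θ < 1)
    (k n : ℕ) (hk : 1 ≤ k) (r v : Fin (k + 1) → ℕ)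
    (hr : ∀ j, 1 ≤ r j) (hn : ∑ j, v j = n) :
    (∏ j : Fin (k + 1), negBinMass τ₁ τ₂ θ (r j) (∑ i ∈ Finset.Iio j, r i) (v j)) /
        negBinMass τ₁ τ₂ θ (∑ j, r j) 0 n =
      τ₁ ^ (∑ j : Fin k, v j.castSucc *
          (∑ i ∈ Finset.univ.filter fun i : Fin (k + 1) => (j : ℕ) < (i : ℕ), r i)) *
        τ₂ ^ (∑ j : Fin k, r j.castSucc * (n - ∑ i ∈ Finset.Iic j.castSucc, v i)) *
        (∏ j : Fin (k + 1), dbinom τ₁ τ₂ ((r j : ℝ) + (v j : ℝ) - 1) (v j)) /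
        dbinom τ₁ τ₂ (((∑ j, r j : ℕ) : ℝ) + (n : ℝ) - 1) n := by
  
  set R : ℕ := ∑ j, r j with hR
  -- the Ioi form of the τ₁ exponent
  have hfilter : ∀ j : Fin k,
      (Finset.univ.filter fun i : Fin (k + 1) => (j : ℕ) < (i : ℕ)) = Ioi j.castSucc := by
    intro j; ext i; simp [Fin.lt_def]
  -- τ₂ exponent identity
  have A_eq : ∑ j, (∑ i ∈ Iio j, r i) * v j
      = ∑ j : Fin k, r j.castSucc * (n - ∑ i ∈ Iic j.castSucc, v i) := by
    rw [swap_sum, Fin.sum_univ_castSucc]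
    have hlast : ∑ j ∈ Ioi (Fin.last k), v j = 0 :=
      Finset.sum_eq_zero fun j hj => absurd (Finset.mem_Ioi.1 hj) (not_lt.2 (Fin.le_last j))
    rw [hlast, mul_zero, add_zero]
    refine Finset.sum_congr rfl fun j _ => ?_
    congr 1
    have := split_sum v j.castSucc
    rw [hn] at this
    omega
  -- τ₁ exponent identity
  have B_eq : n * (R - 1)
      = (∑ j, v j * (r j + (∑ i ∈ Iio j, r i) - 1))
        + ∑ j : Fin k, v j.castSucc *
            (∑ i ∈ Finset.univ.filter fun i : Fin (k + 1) => (j : ℕ) < (i : ℕ), r i) := by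
    have hE : (∑ j : Fin k, v j.castSucc *
        (∑ i ∈ Finset.univ.filter fun i : Fin (k + 1) => (j : ℕ) < (i : ℕ), r i))
        = ∑ j : Fin (k+1), v j * ∑ i ∈ Ioi j, r i := by
      rw [Fin.sum_univ_castSucc]
      have hlast : ∑ i ∈ Ioi (Fin.last k), r i = 0 :=
        Finset.sum_eq_zero fun j hj => absurd (Finset.mem_Ioi.1 hj) (not_lt.2 (Fin.le_last j))
      rw [hlast, mul_zero, add_zero]
      exact Finset.sum_congr rfl fun j _ => by rw [hfilter]
    rw [hE, ← Finset.sum_add_distrib]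
    have hterm : ∀ j : Fin (k+1),
        v j * (r j + (∑ i ∈ Iio j, r i) - 1) + v j * ∑ i ∈ Ioi j, r i
          = v j * (R - 1) := by
      intro j
      rw [← Nat.mul_add]
      congr 1
      have h1 := split_sum r j
      have h2 := sum_Iic_split r j
      have h3 := hr j
      rw [← hR] at h1
      omega
    rw [Finset.sum_congr rfl fun j _ => hterm j, ← Finset.sum_mul, hn]
  -- telescoping of the product factors
  have P_eq : (∏ j : Fin (k+1), ∏ i ∈ range (r j),
        (1 - θ * (τ₂ / τ₁) ^ ((∑ t ∈ Iio j, r t) + i)))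
      = ∏ i ∈ range R, (1 - θ * (τ₂ / τ₁) ^ i) :=
    tele_prod (fun i => 1 - θ * (τ₂ / τ₁) ^ i) (k+1) r
  -- positivity facts
  have hτ₁ : (0:ℝ) < τ₁ := hτ₂.trans hττ
  have hratio₀ : (0:ℝ) < τ₂ / τ₁ := div_pos hτ₂ hτ₁
  have hratio₁ : τ₂ / τ₁ ≤ 1 := le_of_lt ((div_lt_one hτ₁).2 hττ)
  have hP : (0:ℝ) < ∏ i ∈ range R, (1 - θ * (τ₂ / τ₁) ^ i) := by
    refine Finset.prod_pos fun i _ => ?_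
    have : θ * (τ₂ / τ₁) ^ i < 1 := by
      calc θ * (τ₂ / τ₁) ^ i ≤ θ * 1 := by
            exact mul_le_mul_of_nonneg_left (pow_le_one₀ hratio₀.le hratio₁) hθ₀.le
        _ < 1 := by rw [mul_one]; exact hθ₁
    linarith
  have hθn : θ ^ n ≠ 0 := pow_ne_zero _ hθ₀.ne'
  have hτ₁B : (τ₁ : ℝ) ^ (∑ j, v j * (r j + (∑ i ∈ Iio j, r i) - 1)) ≠ 0 :=
    pow_ne_zero _ hτ₁.ne'
  have hτ₁E : (τ₁ : ℝ) ^ (∑ j : Fin k, v j.castSucc *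
      (∑ i ∈ Finset.univ.filter fun i : Fin (k + 1) => (j : ℕ) < (i : ℕ), r i)) ≠ 0 :=
    pow_ne_zero _ hτ₁.ne'
  -- unfold and regroup
  unfold negBinMass
  simp only [Finset.prod_mul_distrib, zpow_neg, zpow_natCast, Finset.prod_inv_distrib,
    Finset.prod_pow_eq_pow_sum, hn, P_eq, Nat.zero_mul, pow_zero, mul_one, Nat.zero_add,
    Nat.add_zero]
  rw [show (∑ j, (∑ i ∈ Iio j, r i) * v j) = _ from A_eq]
  rw [show n * (R - 1) = _ from B_eq, pow_add]
  set Bt := dbinom τ₁ τ₂ ((R : ℝ) + (n : ℝ) - 1) n with hBt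
  have hPf : (∏ x ∈ range R, (τ₁ ^ x - θ * τ₂ ^ x)) ≠ 0 := by
    refine ne_of_gt (Finset.prod_pos fun x _ => ?_)
    have h1 : θ * τ₂ ^ x < τ₂ ^ x := by nlinarith [pow_pos hτ₂ x]
    have h2 : τ₂ ^ x ≤ τ₁ ^ x := pow_le_pow_left₀ hτ₂.le hττ.le x
    linarith
  have hτpow : (∏ x ∈ range R, τ₁ ^ x) ≠ 0 :=
    Finset.prod_ne_zero_iff.2 fun x _ => pow_ne_zero _ hτ₁.ne'
  rcases eq_or_ne Bt 0 with h | h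
  · simp [h]
  · field_simp
end

section
/- Normalization of the deformed negative binomial distribution of the second kind (deformed negative binomial series): let 0 < τ₂ < τ₁ be reals, let 0 < θ < 1, and let r ≥ 1 and s be naturals. Then the series Σ_{v=0}^{∞} C(r + v − 1, v) · θ^v · τ₂^{s v} · τ₁^{−v(r+s−1)} converges and equals ∏_{i=0}^{r−1} (1 − θ(τ₂/τ₁)^{s+i})^{−1}, where C(r+v−1, v) is the deformed binomial coefficient. -/
open Finset

/-- The Gaussian binomial coefficient `C_q(r + v, v)`, defined recursively. -/
noncomputable def qA (q : ℝ) : ℕ → ℕ → ℝ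
  | 0, _ => 1
  | _ + 1, 0 => 1
  | r + 1, v + 1 => qA q (r + 1) v + q ^ (v + 1) * qA q r (v + 1)

lemma qA_zero_left (q : ℝ) (v : ℕ) : qA q 0 v = 1 := by cases v <;> simp [qA]

lemma qA_zero_right (q : ℝ) (r : ℕ) : qA q r 0 = 1 := by cases r <;> simp [qA]

lemma qA_succ_succ (q : ℝ) (r v : ℕ) :
    qA q (r + 1) (v + 1) = qA q (r + 1) v + q ^ (v + 1) * qA q r (v + 1) := by
  simp [qA]

lemma qA_nonneg {q : ℝ} (hq : 0 ≤ q) : ∀ r v, 0 ≤ qA q r v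
  | 0, v => by rw [qA_zero_left]; norm_num
  | r + 1, 0 => by rw [qA_zero_right]; norm_num
  | r + 1, v + 1 => by
    rw [qA_succ_succ]
    have h1 := qA_nonneg hq (r + 1) v
    have h2 := qA_nonneg hq r (v + 1)
    positivity

/-- Hockey-stick identity for Gaussian binomials. -/
lemma qA_succ_sum (q : ℝ) (r v : ℕ) :
    qA q (r + 1) v = ∑ k ∈ Finset.range (v + 1), q ^ k * qA q r k := by
  induction v with
  | zero => simp [qA_zero_right]
  | succ v ih =>
    rw [qA_succ_succ, ih]
    exact (Finset.sum_range_succ _ _).symm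

lemma prod_shift (q : ℝ) (r v : ℕ) :
    ∏ j ∈ Finset.range (v + 1), (1 - q ^ (r + j + 1))
      = (1 - q ^ (r + 1)) * ∏ j ∈ Finset.range v, (1 - q ^ (r + 1 + j + 1)) := by
  rw [Finset.prod_range_succ']
  rw [mul_comm]
  congr 1
  apply Finset.prod_congr rfl
  intro j _
  congr 2
  omega

/-- Product formula for the Gaussian binomial. -/
lemma qA_prod (q : ℝ) (r v : ℕ) :
    qA q r v * ∏ j ∈ Finset.range v, (1 - q ^ (j + 1))
      = ∏ j ∈ Finset.range v, (1 - q ^ (r + j + 1)) := by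
  induction r generalizing v with
  | zero => simp [qA_zero_left]
  | succ r ihr =>
    induction v with
    | zero => simp [qA_zero_right]
    | succ v ihv =>
      rw [qA_succ_succ]
      conv_rhs => rw [Finset.prod_range_succ]
      rw [Finset.prod_range_succ]
      have h1 : qA q (r + 1) v * ∏ j ∈ Finset.range v, (1 - q ^ (j + 1))
          = ∏ j ∈ Finset.range v, (1 - q ^ (r + 1 + j + 1)) := ihv
      have h2 : qA q r (v + 1) * ∏ j ∈ Finset.range (v + 1), (1 - q ^ (j + 1))
          = ∏ j ∈ Finset.range (v + 1), (1 - q ^ (r + j + 1)) := ihr (v + 1)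
      rw [Finset.prod_range_succ, prod_shift] at h2
      linear_combination (1 - q ^ (v + 1)) * h1 + q ^ (v + 1) * h2

lemma qA_prod' (q : ℝ) (r v : ℕ) (hD : ∀ j : ℕ, (1 : ℝ) - q ^ (j + 1) ≠ 0) :
    qA q r v = ∏ j ∈ Finset.range v, ((1 - q ^ (r + j + 1)) / (1 - q ^ (j + 1))) := by
  rw [Finset.prod_div_distrib, ← qA_prod q r v, mul_div_assoc,
    div_self (Finset.prod_ne_zero_iff.2 fun j _ => hD j), mul_one]

/-- The `q`-negative binomial series. -/
lemma qA_hasSum {q : ℝ} (hq0 : 0 < q) (hq1 : q < 1) :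
    ∀ (r : ℕ) (x : ℝ), 0 ≤ x → x < 1 →
      HasSum (fun v : ℕ => qA q r v * x ^ v)
        (∏ i ∈ Finset.range (r + 1), (1 - x * q ^ i)⁻¹) := by
  intro r
  induction r with
  | zero =>
    intro x hx0 hx1
    simpa [qA_zero_left] using hasSum_geometric_of_lt_one hx0 hx1
  | succ r ih =>
    intro x hx0 hx1
    have hqx0 : 0 ≤ q * x := by positivity
    have hqx1 : q * x < 1 := by nlinarith
    have hf := ih (q * x) hqx0 hqx1
    have hg := hasSum_geometric_of_lt_one hx0 hx1
    have hfn : Summable fun v : ℕ => ‖qA q r v * (q * x) ^ v‖ := by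
      simpa only [Real.norm_eq_abs] using hf.summable.abs
    have hgn : Summable fun v : ℕ => ‖x ^ v‖ := by
      simpa only [Real.norm_eq_abs] using hg.summable.abs
    have H := hasSum_sum_range_mul_of_summable_norm hfn hgn
    rw [hf.tsum_eq, hg.tsum_eq] at H
    have hfun : ∀ v : ℕ,
        (∑ k ∈ Finset.range (v + 1), qA q r k * (q * x) ^ k * x ^ (v - k))
          = qA q (r + 1) v * x ^ v := by
      intro v
      rw [qA_succ_sum, Finset.sum_mul]
      apply Finset.sum_congr rfl
      intro k hk
      rw [Finset.mem_range] at hk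
      have hkv : k ≤ v := Nat.lt_succ_iff.mp hk
      calc qA q r k * (q * x) ^ k * x ^ (v - k)
          = q ^ k * qA q r k * (x ^ k * x ^ (v - k)) := by rw [mul_pow]; ring
        _ = q ^ k * qA q r k * x ^ v := by rw [← pow_add, Nat.add_sub_cancel' hkv]
    have hval : (∏ i ∈ Finset.range (r + 1), (1 - q * x * q ^ i)⁻¹) * (1 - x)⁻¹
        = ∏ i ∈ Finset.range (r + 1 + 1), (1 - x * q ^ i)⁻¹ := by
      conv_rhs => rw [Finset.prod_range_succ']
      simp only [pow_zero, mul_one]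
      congr 1
      apply Finset.prod_congr rfl
      intro i _
      congr 2
      rw [pow_succ]
      ring
    have hE : (fun n : ℕ => ∑ k ∈ Finset.range (n + 1), qA q r k * (q * x) ^ k * x ^ (n - k))
        = fun v : ℕ => qA q (r + 1) v * x ^ v := funext hfun
    rw [← hval, ← hE]
    exact H

/-- Normalization of the deformed negative binomial distribution of the second
kind (deformed negative binomial series): for `0 < θ < 1` and `r ≥ 1`,
`Σ_{v=0}^{∞} C(r+v−1, v) θ^v τ₂^{sv} τ₁^{−v(r+s−1)}
  = Π_{i=0}^{r−1} (1 − θ(τ₂/τ₁)^{s+i})⁻¹`, the series being convergent. -/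
theorem deformed_negative_binomial_series
    (τ₁ τ₂ : ℝ) (hτ₂ : 0 < τ₂) (hττ : τ₂ < τ₁) (θ : ℝ) (hθ₀ : 0 < θ) (hθ₁ : θ < 1)
    (r s : ℕ) (hr : 1 ≤ r) :
    HasSum
      (fun v : ℕ =>
        dbinom τ₁ τ₂ ((r : ℝ) + (v : ℝ) - 1) v * θ ^ v * τ₂ ^ (s * v) *
          τ₁ ^ (-((v * (r + s - 1) : ℕ) : ℤ)))
      (∏ i ∈ Finset.range r, (1 - θ * (τ₂ / τ₁) ^ (s + i))⁻¹) := by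
  obtain ⟨m, rfl⟩ : ∃ m, r = m + 1 := ⟨r - 1, (Nat.succ_pred_eq_of_pos hr).symm⟩
  have hτ₁ : (0 : ℝ) < τ₁ := hτ₂.trans hττ
  have hτ₁ne : τ₁ ≠ 0 := ne_of_gt hτ₁
  have hττne : τ₁ - τ₂ ≠ 0 := ne_of_gt (sub_pos.2 hττ)
  set q : ℝ := τ₂ / τ₁ with hq
  have hq0 : 0 < q := div_pos hτ₂ hτ₁
  have hq1 : q < 1 := (div_lt_one hτ₁).2 hττ
  have hD : ∀ j : ℕ, (1 : ℝ) - q ^ (j + 1) ≠ 0 := fun j =>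
    ne_of_gt (sub_pos.2 (pow_lt_one₀ hq0.le hq1 (Nat.succ_ne_zero j)))
  set x : ℝ := θ * q ^ s with hx
  have hx0 : 0 ≤ x := by positivity
  have hx1 : x < 1 := by
    have : q ^ s ≤ 1 := pow_le_one₀ hq0.le hq1.le
    nlinarith
  -- dnum of a natural number
  have hdnum : ∀ n : ℕ, dnum τ₁ τ₂ (n : ℝ) = τ₁ ^ n * (1 - q ^ n) / (τ₁ - τ₂) := by
    intro n
    rw [dnum, Real.rpow_natCast, Real.rpow_natCast, hq, div_pow]
    rw [mul_sub, mul_one, mul_div_cancel₀ _ (pow_ne_zero n hτ₁ne)]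
  -- the pointwise identity
  have hfun : ∀ v : ℕ,
      dbinom τ₁ τ₂ ((m + 1 : ℕ) + (v : ℝ) - 1) v * θ ^ v * τ₂ ^ (s * v) *
          τ₁ ^ (-((v * ((m + 1) + s - 1) : ℕ) : ℤ))
        = qA q m v * x ^ v := by
    intro v
    have harg : ((m + 1 : ℕ) : ℝ) + (v : ℝ) - 1 = (m : ℝ) + (v : ℝ) := by push_cast; ring
    have hfall : dfall τ₁ τ₂ ((m : ℝ) + (v : ℝ)) v
        = ∏ j ∈ Finset.range v, dnum τ₁ τ₂ ((m + j + 1 : ℕ) : ℝ) := by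
      rw [dfall, ← Finset.prod_range_reflect]
      apply Finset.prod_congr rfl
      intro j hj
      rw [Finset.mem_range] at hj
      congr 1
      rw [Nat.sub_sub, Nat.cast_sub (by omega : 1 + j ≤ v)]
      push_cast
      ring
    have hfac : dfac τ₁ τ₂ v = ∏ j ∈ Finset.range v, dnum τ₁ τ₂ ((j + 1 : ℕ) : ℝ) := by
      apply Finset.prod_congr rfl
      intro j _
      congr 1
      push_cast
      ring
    have hbin : dbinom τ₁ τ₂ ((m : ℝ) + (v : ℝ)) v = τ₁ ^ (m * v) * qA q m v := by
      rw [dbinom, hfall, hfac, ← Finset.prod_div_distrib]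
      have hterm : ∀ j ∈ Finset.range v,
          dnum τ₁ τ₂ ((m + j + 1 : ℕ) : ℝ) / dnum τ₁ τ₂ ((j + 1 : ℕ) : ℝ)
            = τ₁ ^ m * ((1 - q ^ (m + j + 1)) / (1 - q ^ (j + 1))) := by
        intro j _
        rw [hdnum, hdnum]
        rw [div_div_div_cancel_right₀]
        · rw [mul_div_assoc', div_eq_div_iff (mul_ne_zero (pow_ne_zero _ hτ₁ne) (hD j)) (hD j)]
          ring
        · exact hττne
      rw [Finset.prod_congr rfl hterm, Finset.prod_mul_distrib, Finset.prod_const,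
        Finset.card_range, ← pow_mul, ← qA_prod' q m v hD]
    rw [harg, hbin]
    have hexp : ((m + 1) + s - 1 : ℕ) = m + s := by omega
    rw [hexp, zpow_neg, zpow_natCast]
    have hpow : τ₁ ^ (m * v) * τ₂ ^ (s * v) * (τ₁ ^ (v * (m + s)))⁻¹ = (q ^ s) ^ v := by
      rw [show v * (m + s) = m * v + s * v by ring, pow_add, hq, div_pow, div_pow,
        ← pow_mul, ← pow_mul]
      field_simp
    rw [hx, mul_pow, ← pow_mul]
    calc τ₁ ^ (m * v) * qA q m v * θ ^ v * τ₂ ^ (s * v) * (τ₁ ^ (v * (m + s)))⁻¹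
        = qA q m v * θ ^ v * (τ₁ ^ (m * v) * τ₂ ^ (s * v) * (τ₁ ^ (v * (m + s)))⁻¹) := by ring
      _ = qA q m v * (θ ^ v * q ^ (s * v)) := by rw [hpow, ← pow_mul]; ring
  have hval : (∏ i ∈ Finset.range (m + 1), (1 - x * q ^ i)⁻¹)
      = ∏ i ∈ Finset.range (m + 1), (1 - θ * q ^ (s + i))⁻¹ := by
    apply Finset.prod_congr rfl
    intro i _
    rw [hx, pow_add]
    ring_nf
  have H := qA_hasSum hq0 hq1 m x hx0 hx1
  rw [hval] at H
  have hE : (fun v : ℕ =>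
      dbinom τ₁ τ₂ ((m + 1 : ℕ) + (v : ℝ) - 1) v * θ ^ v * τ₂ ^ (s * v) *
        τ₁ ^ (-((v * ((m + 1) + s - 1) : ℕ) : ℤ)))
      = fun v : ℕ => qA q m v * x ^ v := funext hfun
  rw [hE]
  exact H
end
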